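/- arXiv:1303.6797 — 7 statements merged into one kernel-verified Lean document; each statement's English description precedes it below -/
import Mathlib

section
/- Let $a_n, b_n$ be positive real sequences such that $\lim_{n\to\infty} a_n/b_n = c$ and both power series $\sum_{n=0}^\infty a_n x^n/n!$ and $\sum_{n=0}^\infty b_n x^n/n!$ converge for all real $x$. Then $\lim_{x\to+\infty} \frac{\sum_{n=0}^\infty a_n x^n/n!}{\sum_{n=0}^\infty b_n x^n/n!} = c$. -/
open Filter

/-- Ratio limit theorem for exponential generating functions with positive
coefficients: if `aₙ/bₙ → c` and both EGFs converge everywhere, then the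
ratio of the EGFs tends to `c` as `x → +∞`. -/
theorem egf_ratio_limit (a b : ℕ → ℝ) (c : ℝ)
    (ha : ∀ n, 0 < a n) (hb : ∀ n, 0 < b n)
    (hratio : Tendsto (fun n => a n / b n) atTop (nhds c))
    (hsa : ∀ x : ℝ, Summable (fun n => a n * x ^ n / (Nat.factorial n : ℝ)))
    (hsb : ∀ x : ℝ, Summable (fun n => b n * x ^ n / (Nat.factorial n : ℝ))) :
    Tendsto (fun x : ℝ =>
        (∑' n : ℕ, a n * x ^ n / (Nat.factorial n : ℝ)) /
        (∑' n : ℕ, b n * x ^ n / (Nat.factorial n : ℝ)))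
      atTop (nhds c) := by
  rw [Metric.tendsto_nhds]
  intro ε hε
  obtain ⟨N, hN⟩ := Metric.tendsto_atTop.mp hratio (ε / 2) (by linarith)
  have hbound : ∀ n, N ≤ n → |a n - c * b n| ≤ ε / 2 * b n := by
    intro n hn
    have h1 := (hN n hn).le
    rw [Real.dist_eq] at h1
    have hbn := hb n
    have he : a n - c * b n = (a n / b n - c) * b n := by field_simp
    rw [he, abs_mul, abs_of_pos hbn]
    exact mul_le_mul_of_nonneg_right h1 hbn.le
  set g : ℝ → ℝ := fun x => ∑ k ∈ Finset.range N,
    (|a k - c * b k| * (Nat.factorial N : ℝ) / ((Nat.factorial k : ℝ) * b N)) *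
      (x ^ k / x ^ N) with hgdef
  have hgt : Tendsto g atTop (nhds 0) := by
    have h0 : (0 : ℝ) = ∑ k ∈ Finset.range N, (0 : ℝ) := by simp
    rw [hgdef, h0]
    refine tendsto_finset_sum _ fun k hk => ?_
    have := tendsto_pow_div_pow_atTop_zero (𝕜 := ℝ) (Finset.mem_range.mp hk)
    simpa using this.const_mul
      (|a k - c * b k| * (Nat.factorial N : ℝ) / ((Nat.factorial k : ℝ) * b N))
  have hgev : ∀ᶠ x in atTop, g x < ε / 2 := hgt.eventually_lt_const (by linarith)
  filter_upwards [hgev, eventually_gt_atTop (0 : ℝ)] with x hgx hx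
  set A := ∑' n : ℕ, a n * x ^ n / (Nat.factorial n : ℝ) with hA
  set B := ∑' n : ℕ, b n * x ^ n / (Nat.factorial n : ℝ) with hB
  have hxp : ∀ n : ℕ, (0 : ℝ) < x ^ n / (Nat.factorial n : ℝ) := fun n =>
    div_pos (pow_pos hx n) (by positivity)
  have hbterm : ∀ n : ℕ, (0 : ℝ) < b n * x ^ n / (Nat.factorial n : ℝ) := fun n => by
    rw [mul_div_assoc]; exact mul_pos (hb n) (hxp n)
  have hBpos : 0 < B := Summable.tsum_pos (hsb x) (fun n => (hbterm n).le) 0 (hbterm 0)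
  set F : ℕ → ℝ := fun n => |a n - c * b n| * x ^ n / (Nat.factorial n : ℝ) with hFdef
  have hFeq : ∀ n, F n = |a n - c * b n| * (x ^ n / (Nat.factorial n : ℝ)) := fun n => by
    simp only [hFdef, mul_div_assoc]
  have hFnonneg : ∀ n, 0 ≤ F n := fun n => by
    rw [hFeq]; exact mul_nonneg (abs_nonneg _) (hxp n).le
  have hFsum : Summable F := by
    have hs : Summable fun n => a n * x ^ n / (Nat.factorial n : ℝ)
        + |c| * (b n * x ^ n / (Nat.factorial n : ℝ)) :=
      (hsa x).add ((hsb x).mul_left |c|)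
    refine Summable.of_nonneg_of_le hFnonneg (fun n => ?_) hs
    rw [hFeq]
    have h1 : |a n - c * b n| ≤ a n + |c| * b n := by
      calc |a n - c * b n| ≤ |a n| + |c * b n| := abs_sub _ _
        _ = a n + |c| * b n := by
            rw [abs_of_pos (ha n), abs_mul, abs_of_pos (hb n)]
    calc |a n - c * b n| * (x ^ n / (Nat.factorial n : ℝ))
        ≤ (a n + |c| * b n) * (x ^ n / (Nat.factorial n : ℝ)) :=
          mul_le_mul_of_nonneg_right h1 (hxp n).le
      _ = a n * x ^ n / (Nat.factorial n : ℝ)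
          + |c| * (b n * x ^ n / (Nat.factorial n : ℝ)) := by ring
  have hsubeq : A - c * B = ∑' n : ℕ, (a n - c * b n) * x ^ n / (Nat.factorial n : ℝ) := by
    rw [hA, hB, ← tsum_mul_left, ← Summable.tsum_sub (hsa x) ((hsb x).mul_left c)]
    exact tsum_congr fun n => by ring
  have hnormF : ∀ n : ℕ,
      ‖(a n - c * b n) * x ^ n / (Nat.factorial n : ℝ)‖ = F n := fun n => by
    rw [Real.norm_eq_abs, abs_div, abs_mul, abs_of_pos (pow_pos hx n),
      abs_of_pos (show (0:ℝ) < (Nat.factorial n : ℝ) by positivity)]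
  have habs : |A - c * B| ≤ ∑' n, F n := by
    rw [hsubeq]
    have h2 := norm_tsum_le_tsum_norm (f := fun n =>
      (a n - c * b n) * x ^ n / (Nat.factorial n : ℝ))
      (hFsum.congr fun n => (hnormF n).symm)
    rw [Real.norm_eq_abs] at h2
    exact h2.trans (le_of_eq (tsum_congr hnormF))
  have hsplit := Summable.sum_add_tsum_nat_add (f := F) N hFsum
  have htail : ∑' n : ℕ, F (n + N) ≤ ε / 2 * B := by
    have hFt : Summable fun n => F (n + N) := (summable_nat_add_iff N).mpr hFsum
    have hbt : Summable fun n : ℕ =>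
        b (n + N) * x ^ (n + N) / (Nat.factorial (n + N) : ℝ) :=
      (summable_nat_add_iff N).mpr (hsb x)
    have h1 : ∑' n : ℕ, F (n + N) ≤ ∑' n : ℕ,
        ε / 2 * (b (n + N) * x ^ (n + N) / (Nat.factorial (n + N) : ℝ)) := by
      refine Summable.tsum_le_tsum (fun n => ?_) hFt (hbt.mul_left _)
      rw [hFeq]
      calc |a (n + N) - c * b (n + N)| * (x ^ (n + N) / (Nat.factorial (n + N) : ℝ))
          ≤ ε / 2 * b (n + N) * (x ^ (n + N) / (Nat.factorial (n + N) : ℝ)) :=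
            mul_le_mul_of_nonneg_right (hbound (n + N) (Nat.le_add_left _ _)) (hxp (n + N)).le
        _ = ε / 2 * (b (n + N) * x ^ (n + N) / (Nat.factorial (n + N) : ℝ)) := by ring
    rw [tsum_mul_left] at h1
    refine h1.trans (mul_le_mul_of_nonneg_left ?_ (by linarith))
    have hsplitB := Summable.sum_add_tsum_nat_add
      (f := fun n => b n * x ^ n / (Nat.factorial n : ℝ)) N (hsb x)
    have hheadB : 0 ≤ ∑ k ∈ Finset.range N, b k * x ^ k / (Nat.factorial k : ℝ) :=
      Finset.sum_nonneg fun k _ => (hbterm k).le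
    rw [hB]; linarith
  have hhead : (∑ k ∈ Finset.range N, F k) / B ≤ g x := by
    rw [Finset.sum_div, hgdef]
    refine Finset.sum_le_sum fun k hk => ?_
    have hBN : b N * x ^ N / (Nat.factorial N : ℝ) ≤ B := by
      rw [hB]
      exact Summable.le_tsum (hsb x) N fun j _ => (hbterm j).le
    have hBNpos : 0 < b N * x ^ N / (Nat.factorial N : ℝ) := hbterm N
    have h1 : F k / B ≤ F k / (b N * x ^ N / (Nat.factorial N : ℝ)) :=
      div_le_div_of_nonneg_left (hFnonneg k) hBNpos hBN
    refine h1.trans (le_of_eq ?_)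
    rw [hFeq]
    have hfk : (Nat.factorial k : ℝ) ≠ 0 := by positivity
    have hfN : (Nat.factorial N : ℝ) ≠ 0 := by positivity
    have hxN : x ^ N ≠ 0 := (pow_pos hx N).ne'
    have hbN : b N ≠ 0 := (hb N).ne'
    field_simp
  rw [Real.dist_eq]
  have hBne : B ≠ 0 := hBpos.ne'
  have heq : A / B - c = (A - c * B) / B := by field_simp
  rw [heq, abs_div, abs_of_pos hBpos]
  have h3 : |A - c * B| ≤ (∑ k ∈ Finset.range N, F k) + ε / 2 * B := by
    rw [← hsplit] at habs; linarith
  have h2 : |A - c * B| / B ≤ (∑ k ∈ Finset.range N, F k) / B + ε / 2 :=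
    calc |A - c * B| / B ≤ ((∑ k ∈ Finset.range N, F k) + ε / 2 * B) / B :=
          (div_le_div_iff_of_pos_right hBpos).mpr h3
      _ = (∑ k ∈ Finset.range N, F k) / B + ε / 2 := by
          rw [add_div, mul_div_assoc, div_self hBne, mul_one]
  linarith
end

section
/- Define $A_{k,1} = \frac{2^k k!(k-1)!}{(2k)!}$ and recursively $A_{k,p} = \sum_{l=p-1}^{k-1} \frac{2^k k! \Gamma(k+l)}{2^l l! \Gamma(2k+1)} A_{l,p-1}$ for $p \geq 2$. Then for all $k \geq p \geq 1$, $A_{k,p} \leq \frac{1}{2^{p-2}}$. -/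
open Finset

/-!
Write `c(k, l) = 2^k k! (k+l-1)! / (2^l l! (2k)!)` for the coefficient of `A_{l,p-1}` in
`A_{k,p}`, so that `A_{k,1} = c(k, 0)`. Since `c(k, l+1) / c(k, l) = (k+l) / (2(l+1)) ≥ 1` for
`l + 2 ≤ k`, the coefficients increase in `l < k` up to `c(k, k-1) = 1/(2k-1)`. A sum of at most
`k - 1` of them is therefore at most `(k-1)/(2k-1) ≤ 1/2`, so each step of the recursion at least
halves the bound, starting from `A_{k,1} ≤ 1`.
-/

/-- The coefficients `A_{k,p}`: `A_{k,1} = 2^k k!(k-1)!/(2k)!` and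
`A_{k,p} = ∑_{l=p-1}^{k-1} (2^k k! Γ(k+l) / (2^l l! Γ(2k+1))) A_{l,p-1}`
for `p ≥ 2` (here `Γ(k+l) = (k+l-1)!`, `Γ(2k+1) = (2k)!`). -/
noncomputable def A : ℕ → ℕ → ℝ
  | _, 0 => 0
  | k, 1 => (2 : ℝ) ^ k * (Nat.factorial k : ℝ) * (Nat.factorial (k - 1) : ℝ) /
      (Nat.factorial (2 * k) : ℝ)
  | k, p + 2 => ∑ l ∈ Finset.Ico (p + 1) k,
      (2 : ℝ) ^ k * (Nat.factorial k : ℝ) * (Nat.factorial (k + l - 1) : ℝ) /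
        ((2 : ℝ) ^ l * (Nat.factorial l : ℝ) * (Nat.factorial (2 * k) : ℝ)) * A l (p + 1)

noncomputable def A.coeff (k l : ℕ) : ℝ :=
  (2 : ℝ) ^ k * (Nat.factorial k : ℝ) * (Nat.factorial (k + l - 1) : ℝ) /
    ((2 : ℝ) ^ l * (Nat.factorial l : ℝ) * (Nat.factorial (2 * k) : ℝ))

namespace A

lemma apply_one (k : ℕ) : A k 1 = coeff k 0 := by
  simp [A, coeff]

lemma apply_add_two (k p : ℕ) :
    A k (p + 2) = ∑ l ∈ Ico (p + 1) k, coeff k l * A l (p + 1) := by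
  rw [A]; rfl

lemma coeff_nonneg (k l : ℕ) : 0 ≤ coeff k l := by
  unfold coeff; positivity

lemma coeff_succ_right (k l : ℕ) :
    coeff (k + 1) (l + 1) = (k + l + 1) / (2 * (l + 1)) * coeff (k + 1) l := by
  unfold coeff
  rw [show k + 1 + (l + 1) - 1 = (k + 1 + l - 1) + 1 by omega, Nat.factorial_succ (k + 1 + l - 1),
    Nat.factorial_succ l, show k + 1 + l - 1 + 1 = k + l + 1 by omega]
  field_simp
  push_cast
  ring

lemma coeff_succ_self (k : ℕ) : coeff (k + 1) k = 1 / (2 * k + 1) := by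
  unfold coeff
  rw [show k + 1 + k - 1 = 2 * k by omega, show 2 * (k + 1) = 2 * k + 1 + 1 by ring,
    Nat.factorial_succ (2 * k + 1), Nat.factorial_succ (2 * k), Nat.factorial_succ k]
  field_simp
  push_cast
  ring

lemma coeff_le_coeff_succ_right {k l : ℕ} (h : l < k) :
    coeff (k + 1) l ≤ coeff (k + 1) (l + 1) := by
  rw [coeff_succ_right]
  refine le_mul_of_one_le_left (coeff_nonneg _ _) ?_
  rw [one_le_div (by positivity)]
  exact_mod_cast (by omega : 2 * (l + 1) ≤ k + l + 1)

lemma coeff_le {k l : ℕ} (h : l ≤ k) : coeff (k + 1) l ≤ 1 / (2 * k + 1) := by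
  rw [← coeff_succ_self]
  induction h using Nat.decreasingInduction with
  | self => exact le_rfl
  | of_succ l hl ih => exact (coeff_le_coeff_succ_right hl).trans ih

lemma sum_coeff_Ico_le_half {a : ℕ} (ha : 1 ≤ a) (k : ℕ) :
    ∑ l ∈ Ico a k, coeff k l ≤ 1 / 2 := by
  rcases k with _ | k
  · simp
  calc ∑ l ∈ Ico a (k + 1), coeff (k + 1) l
      ≤ #(Ico a (k + 1)) • (1 / (2 * k + 1) : ℝ) :=
        sum_le_card_nsmul _ _ _ fun l hl => coeff_le (Nat.lt_succ_iff.mp (mem_Ico.mp hl).2)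
    _ ≤ k * (1 / (2 * k + 1)) := by
        rw [nsmul_eq_mul, Nat.card_Ico]
        gcongr
        exact_mod_cast (by omega : k + 1 - a ≤ k)
    _ ≤ 1 / 2 := by
        rw [mul_one_div, div_le_div_iff₀ (by positivity) two_pos]
        linarith

lemma apply_one_le_one (k : ℕ) : A k 1 ≤ 1 := by
  rw [apply_one]
  rcases k with _ | k
  · simp [coeff]
  · refine (coeff_le k.zero_le).trans (div_le_one_of_le₀ ?_ (by positivity))
    linarith [k.cast_nonneg (α := ℝ)]

lemma apply_add_two_le_half {p : ℕ} {M : ℝ} (hM : 0 ≤ M) (h : ∀ l, A l (p + 1) ≤ M)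
    (k : ℕ) : A k (p + 2) ≤ M / 2 := by
  calc A k (p + 2) = ∑ l ∈ Ico (p + 1) k, coeff k l * A l (p + 1) := apply_add_two k p
    _ ≤ ∑ l ∈ Ico (p + 1) k, coeff k l * M :=
        sum_le_sum fun l _ => mul_le_mul_of_nonneg_left (h l) (coeff_nonneg k l)
    _ = (∑ l ∈ Ico (p + 1) k, coeff k l) * M := (sum_mul ..).symm
    _ ≤ 1 / 2 * M := mul_le_mul_of_nonneg_right (sum_coeff_Ico_le_half p.succ_pos k) hM
    _ = M / 2 := by ring

end A

theorem A_upper_bound_general (k p : ℕ) :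
    A k p ≤ (2 : ℝ) ^ ((2 : ℤ) - (p : ℤ)) := by
  induction p using Nat.twoStepInduction generalizing k with
  | zero => simp [A]
  | one => exact (A.apply_one_le_one k).trans (by norm_num)
  | more p _ ih =>
    calc A k (p + 2) ≤ (2 : ℝ) ^ ((2 : ℤ) - (p + 1 : ℕ)) / 2 :=
          A.apply_add_two_le_half (by positivity) ih k
      _ = (2 : ℝ) ^ ((2 : ℤ) - (p + 2 : ℕ)) := by
        rw [show (2 : ℤ) - (p + 1 : ℕ) = (2 - (p + 2 : ℕ)) + 1 by push_cast; ring,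
          zpow_add_one₀ two_ne_zero, mul_div_cancel_right₀ _ two_ne_zero]

/-- For all `k ≥ p ≥ 1`, `A_{k,p} ≤ 1/2^{p-2} = 2^{2-p}`. -/
theorem A_upper_bound (k p : ℕ) (hp : 1 ≤ p) (hpk : p ≤ k) :
    A k p ≤ (2 : ℝ) ^ ((2 : ℤ) - (p : ℤ)) :=
  A_upper_bound_general k p
end

section
/- For integers $k \geq 1$ and $2 \leq p \leq k$, $\sum_{l=p}^{k-1} \frac{2^k k! (k+l-1)!}{2^l l! (2k)!} \leq \frac{k-p}{2k-1} < \frac{1}{2}$. -/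
lemma key_nat (d : ℕ) : ∀ k l : ℕ, l + 1 + d = k →
    (2*k-1) * 2^k * (Nat.factorial k) * (Nat.factorial (k+l-1)) ≤
      2^l * (Nat.factorial l) * (Nat.factorial (2*k)) := by
  induction d with
  | zero =>
    intro k l h
    have hk : k = l + 1 := by omega
    subst hk
    have h1 : (l+1) + l - 1 = 2*l := by omega
    have h2 : 2*(l+1) = 2*l+1+1 := by omega
    have h0 : 2*(l+1)-1 = 2*l+1 := by omega
    rw [h1, h0, h2, Nat.factorial_succ (2*l+1), Nat.factorial_succ (2*l), Nat.factorial_succ l,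
      pow_succ]
    exact le_of_eq (by ring)
  | succ d ih =>
    intro k l h
    have ihl := ih k (l+1) (by omega)
    have hkl : k + (l+1) - 1 = k + l := by omega
    rw [hkl] at ihl
    have hfac : Nat.factorial (k + l) = (k+l) * Nat.factorial (k+l-1) := by
      have h3 : k + l = (k + l - 1) + 1 := by omega
      rw [h3, Nat.factorial_succ]
      congr 1
    rw [hfac, Nat.factorial_succ l, pow_succ] at ihl
    have h4 : 2*(l+1) ≤ k + l := by omega
    have hpos : 0 < k + l := by omega
    refine Nat.le_of_mul_le_mul_left ?_ hpos
    calc (k+l) * ((2*k-1) * 2^k * (Nat.factorial k) * (Nat.factorial (k+l-1)))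
        = (2*k-1) * 2^k * (Nat.factorial k) * ((k+l) * Nat.factorial (k+l-1)) := by ring
      _ ≤ 2^l * 2 * ((l+1) * Nat.factorial l) * (Nat.factorial (2*k)) := ihl
      _ = (2*(l+1)) * (2^l * (Nat.factorial l) * (Nat.factorial (2*k))) := by ring
      _ ≤ (k+l) * (2^l * (Nat.factorial l) * (Nat.factorial (2*k))) :=
          Nat.mul_le_mul_right _ h4

open Finset

/-- For `k ≥ 1` and `2 ≤ p ≤ k`,
`∑_{l=p}^{k-1} 2^k k! (k+l-1)! / (2^l l! (2k)!) ≤ (k-p)/(2k-1) < 1/2`. -/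
theorem sum_B_lt_half (k p : ℕ) (hk : 1 ≤ k) (hp : 2 ≤ p) (hpk : p ≤ k) :
    (∑ l ∈ Finset.Ico p k,
        (2 : ℝ) ^ k * (Nat.factorial k : ℝ) * (Nat.factorial (k + l - 1) : ℝ) /
          ((2 : ℝ) ^ l * (Nat.factorial l : ℝ) * (Nat.factorial (2 * k) : ℝ)))
      ≤ ((k : ℝ) - p) / (2 * k - 1) ∧
    ((k : ℝ) - p) / (2 * k - 1) < 1 / 2 := by
  have hk1 : (1:ℝ) ≤ (k:ℝ) := by exact_mod_cast hk
  have hp2 : (2:ℝ) ≤ (p:ℝ) := by exact_mod_cast hp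
  have hden : (0:ℝ) < 2*(k:ℝ) - 1 := by linarith
  constructor
  · have hbound : ∀ l ∈ Finset.Ico p k,
        (2 : ℝ) ^ k * (Nat.factorial k : ℝ) * (Nat.factorial (k + l - 1) : ℝ) /
          ((2 : ℝ) ^ l * (Nat.factorial l : ℝ) * (Nat.factorial (2 * k) : ℝ))
          ≤ 1 / (2*(k:ℝ) - 1) := by
      intro l hl
      rw [Finset.mem_Ico] at hl
      have hnat := key_nat (k - l - 1) k l (by omega)
      have hc : (((2*k-1) * 2^k * (Nat.factorial k) * (Nat.factorial (k+l-1)) : ℕ) : ℝ)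
          ≤ ((2^l * (Nat.factorial l) * (Nat.factorial (2*k)) : ℕ) : ℝ) := by
        exact_mod_cast hnat
      push_cast [Nat.cast_sub (show 1 ≤ 2*k by omega)] at hc
      have hfp : (0:ℝ) < (Nat.factorial l : ℝ) := by exact_mod_cast Nat.factorial_pos l
      have hfp2 : (0:ℝ) < (Nat.factorial (2*k) : ℝ) := by exact_mod_cast Nat.factorial_pos (2*k)
      rw [div_le_div_iff₀ (by positivity) hden]
      nlinarith [hc]
    calc _ ≤ (Finset.Ico p k).card • (1 / (2*(k:ℝ) - 1)) :=
          Finset.sum_le_card_nsmul _ _ _ hbound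
      _ = ((k : ℝ) - p) / (2 * k - 1) := by
          rw [Nat.card_Ico, nsmul_eq_mul, Nat.cast_sub hpk]
          ring
  · rw [div_lt_div_iff₀ hden (by norm_num : (0:ℝ) < 2)]
    linarith
end

section
/- Fix an integer $p \geq 1$. For all $\theta \in [0,1]$ and all $k \geq p$, the coefficients satisfy $\frac{1}{2^p} A_{k,p} \leq A_{k,p}(\theta) \leq A_{k,p}$ and $|A_{k,p}(\theta) - A_{k,p}| \leq \theta\, p\, A_{k,p}$. -/
open Finset

noncomputable def Pf (m n : ℕ) (θ : ℝ) : ℝ := ∏ j ∈ Finset.Ico m n, ((j : ℝ) + θ)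

lemma Pf_pos {m n : ℕ} {θ : ℝ} (hθ : 0 ≤ θ) (hm : 1 ≤ m) : 0 < Pf m n θ := by
  apply Finset.prod_pos
  intro j hj
  have h1 : 1 ≤ j := le_trans hm (Finset.mem_Ico.mp hj).1
  have h2 : (1:ℝ) ≤ (j:ℝ) := by exact_mod_cast h1
  linarith

lemma Pf_mono {m n : ℕ} {θ : ℝ} (hθ : 0 ≤ θ) : Pf m n 0 ≤ Pf m n θ := by
  apply Finset.prod_le_prod
  · intro j _; positivity
  · intro j _; linarith

lemma Gamma_prod {θ : ℝ} (hθ : 0 ≤ θ) (m : ℕ) (hm : 1 ≤ m) :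
    ∀ n, m ≤ n → Real.Gamma ((n:ℝ) + θ) = Real.Gamma ((m:ℝ) + θ) * Pf m n θ := by
  intro n hn
  induction n, hn using Nat.le_induction with
  | base => simp [Pf]
  | succ n hn ih =>
    have hne : ((n:ℝ) + θ) ≠ 0 := by
      have : (1:ℝ) ≤ (n:ℝ) := by exact_mod_cast le_trans hm hn
      positivity
    have h1 : ((n+1:ℕ):ℝ) + θ = ((n:ℝ) + θ) + 1 := by push_cast; ring
    simp only [Pf] at ih ⊢
    rw [h1, Real.Gamma_add_one hne, ih, Finset.prod_Ico_succ_top hn]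
    ring

lemma Pf_upper {θ : ℝ} (hθ0 : 0 ≤ θ) (hθ1 : θ ≤ 1) (m : ℕ) (hm : 1 ≤ m) :
    ∀ n, m ≤ n → (m:ℝ) * Pf m n θ ≤ ((m:ℝ) + θ * ((n:ℝ) - (m:ℝ))) * Pf m n 0 := by
  intro n hn
  induction n, hn using Nat.le_induction with
  | base => simp [Pf]
  | succ n hn ih =>
    have hP0 : 0 < Pf m n 0 := Pf_pos le_rfl hm
    have hPθ : 0 < Pf m n θ := Pf_pos hθ0 hm
    have hmn : (m:ℝ) ≤ (n:ℝ) := by exact_mod_cast hn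
    have hm1 : (1:ℝ) ≤ (m:ℝ) := by exact_mod_cast hm
    have e1 : Pf m (n+1) θ = Pf m n θ * ((n:ℝ) + θ) := by
      rw [Pf, Finset.prod_Ico_succ_top hn, ← Pf]
    have e2 : Pf m (n+1) 0 = Pf m n 0 * ((n:ℝ) + 0) := by
      rw [Pf, Finset.prod_Ico_succ_top hn, ← Pf]
    rw [e1, e2]
    push_cast
    have key : ((m:ℝ) + θ*((n:ℝ)-(m:ℝ))) * ((n:ℝ)+θ) ≤ ((m:ℝ) + θ*((n:ℝ)+1-(m:ℝ))) * (n:ℝ) := by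
      nlinarith [mul_nonneg (mul_nonneg hθ0 (sub_nonneg.mpr hθ1)) (sub_nonneg.mpr hmn)]
    have step : (m:ℝ) * Pf m n θ * ((n:ℝ)+θ) ≤ ((m:ℝ) + θ*((n:ℝ)-(m:ℝ))) * Pf m n 0 * ((n:ℝ)+θ) := by
      apply mul_le_mul_of_nonneg_right ih
      linarith
    calc (m:ℝ) * (Pf m n θ * ((n:ℝ)+θ)) = (m:ℝ) * Pf m n θ * ((n:ℝ)+θ) := by ring
      _ ≤ ((m:ℝ) + θ*((n:ℝ)-(m:ℝ))) * Pf m n 0 * ((n:ℝ)+θ) := step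
      _ = ((m:ℝ) + θ*((n:ℝ)-(m:ℝ))) * ((n:ℝ)+θ) * Pf m n 0 := by ring
      _ ≤ ((m:ℝ) + θ*((n:ℝ)+1-(m:ℝ))) * (n:ℝ) * Pf m n 0 := by
          exact mul_le_mul_of_nonneg_right key hP0.le
      _ = ((m:ℝ) + θ*((n:ℝ)+1-(m:ℝ))) * (Pf m n 0 * ((n:ℝ)+0)) := by ring

/-- For `k ≤ m ≤ 2k`, `Pf m (2k) θ ≤ (1+θ) Pf m (2k) 0`. -/
lemma Pf_upper' {θ : ℝ} (hθ0 : 0 ≤ θ) (hθ1 : θ ≤ 1) {k m : ℕ} (hk : 1 ≤ k)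
    (hkm : k ≤ m) (hm2 : m ≤ 2*k) :
    Pf m (2*k) θ ≤ (1+θ) * Pf m (2*k) 0 := by
  have hm1 : 1 ≤ m := le_trans hk hkm
  have h := Pf_upper hθ0 hθ1 m hm1 (2*k) hm2
  have hP0 : 0 < Pf m (2*k) 0 := Pf_pos le_rfl hm1
  have hmpos : (0:ℝ) < (m:ℝ) := by exact_mod_cast hm1
  have hnm : ((2*k:ℕ):ℝ) - (m:ℝ) ≤ (m:ℝ) := by
    have : ((2*k:ℕ):ℝ) ≤ 2*(m:ℝ) := by push_cast; exact_mod_cast (by omega : 2*k ≤ 2*m)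
    linarith
  have h2 : ((m:ℝ) + θ * (((2*k:ℕ):ℝ) - (m:ℝ))) * Pf m (2*k) 0 ≤ ((1+θ)*(m:ℝ)) * Pf m (2*k) 0 := by
    apply mul_le_mul_of_nonneg_right _ hP0.le
    nlinarith
  have := le_trans h h2
  nlinarith

lemma inv_bounds {x y θ : ℝ} (hx : 0 < x) (hxy : x ≤ y) (hy : y ≤ (1+θ)*x)
    (hθ1 : θ ≤ 1) :
    (1/2)*(1/x) ≤ 1/y ∧ 1/y ≤ 1/x ∧ |1/y - 1/x| ≤ θ*(1/x) := by
  have hy0 : 0 < y := lt_of_lt_of_le hx hxy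
  have h2 : 1/y ≤ 1/x := one_div_le_one_div_of_le hx hxy
  refine ⟨?_, h2, ?_⟩
  · rw [show (1/2)*(1/x) = 1/(2*x) by ring]
    apply one_div_le_one_div_of_le hy0
    nlinarith
  · rw [abs_sub_comm, abs_of_nonneg (by linarith)]
    have hax : x * (1/x) = 1 := by field_simp
    have hay : y * (1/y) = 1 := by field_simp
    have h1x : 0 < 1/x := by positivity
    have h1y : 0 < 1/y := by positivity
    nlinarith [mul_le_mul_of_nonneg_left hy (mul_pos h1x h1y).le]

lemma g_eq (k m : ℕ) (hk : 1 ≤ k) (hm1 : 1 ≤ m) (hm3 : m ≤ 2*k) (θ : ℝ) (hθ : 0 ≤ θ) :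
    (2*(k:ℝ)+θ)/(2*(k:ℝ)) * (Real.Gamma ((m:ℝ)+θ) / Real.Gamma (2*(k:ℝ)+1+θ)) =
      1/(2*(k:ℝ) * Pf m (2*k) θ) := by
  have hc : 2*(k:ℝ)+1+θ = ((2*k+1:ℕ):ℝ) + θ := by push_cast; ring
  have hG := Gamma_prod hθ m hm1 (2*k+1) (by omega)
  have hsplit : Pf m (2*k+1) θ = Pf m (2*k) θ * (((2*k:ℕ):ℝ) + θ) := by
    simp only [Pf]
    rw [Finset.prod_Ico_succ_top hm3]
  have hΓpos : 0 < Real.Gamma ((m:ℝ)+θ) := by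
    apply Real.Gamma_pos_of_pos
    have : (1:ℝ) ≤ (m:ℝ) := by exact_mod_cast hm1
    linarith
  have hPpos : 0 < Pf m (2*k) θ := Pf_pos hθ hm1
  have hk0 : (0:ℝ) < (k:ℝ) := by exact_mod_cast hk
  have h2k : ((2*k:ℕ):ℝ) + θ = 2*(k:ℝ) + θ := by push_cast; ring
  have h2kpos : 0 < 2*(k:ℝ) + θ := by linarith
  rw [hc, hG, hsplit, h2k]
  field_simp

/-- The coefficient `C_{k,l}(t) = (2^k k!/(2^l l!)) / (2k · Pf (k+l) (2k) t)`. -/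
noncomputable def Cc (k l : ℕ) (t : ℝ) : ℝ :=
  ((2:ℝ)^k * (Nat.factorial k : ℝ) / ((2:ℝ)^l * (Nat.factorial l : ℝ))) *
    (1/(2*(k:ℝ) * Pf (k+l) (2*k) t))

lemma Cc_bounds (k l : ℕ) (hk : 1 ≤ k) (hl : l ≤ k) {θ : ℝ} (hθ0 : 0 ≤ θ) (hθ1 : θ ≤ 1) :
    0 < Cc k l 0 ∧ (1/2)*Cc k l 0 ≤ Cc k l θ ∧ Cc k l θ ≤ Cc k l 0 ∧
      |Cc k l θ - Cc k l 0| ≤ θ * Cc k l 0 := by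
  have hm1 : 1 ≤ k + l := by omega
  have hP0 : 0 < Pf (k+l) (2*k) 0 := Pf_pos le_rfl hm1
  have hk0 : (0:ℝ) < (k:ℝ) := by exact_mod_cast hk
  have hx : 0 < 2*(k:ℝ) * Pf (k+l) (2*k) 0 := by positivity
  have hxy : 2*(k:ℝ) * Pf (k+l) (2*k) 0 ≤ 2*(k:ℝ) * Pf (k+l) (2*k) θ := by
    apply mul_le_mul_of_nonneg_left (Pf_mono hθ0) (by positivity)
  have hup : 2*(k:ℝ) * Pf (k+l) (2*k) θ ≤ (1+θ) * (2*(k:ℝ) * Pf (k+l) (2*k) 0) := by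
    have := Pf_upper' hθ0 hθ1 hk (by omega : k ≤ k + l) (by omega : k + l ≤ 2*k)
    nlinarith
  obtain ⟨i1, i2, i3⟩ := inv_bounds hx hxy hup hθ1
  have hK : 0 < (2:ℝ)^k * (Nat.factorial k : ℝ) / ((2:ℝ)^l * (Nat.factorial l : ℝ)) := by
    have := Nat.factorial_pos k
    have := Nat.factorial_pos l
    positivity
  unfold Cc
  refine ⟨by positivity, ?_, ?_, ?_⟩
  · calc (1/2) * ((2:ℝ)^k * ↑(Nat.factorial k) / ((2:ℝ)^l * ↑(Nat.factorial l)) *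
        (1/(2*(k:ℝ) * Pf (k+l) (2*k) 0)))
        = ((2:ℝ)^k * ↑(Nat.factorial k) / ((2:ℝ)^l * ↑(Nat.factorial l))) *
          ((1/2) * (1/(2*(k:ℝ) * Pf (k+l) (2*k) 0))) := by ring
      _ ≤ _ := mul_le_mul_of_nonneg_left i1 hK.le
  · exact mul_le_mul_of_nonneg_left i2 hK.le
  · rw [← mul_sub, abs_mul, abs_of_nonneg hK.le]
    calc ((2:ℝ)^k * ↑(Nat.factorial k) / ((2:ℝ)^l * ↑(Nat.factorial l))) *
          |1/(2*(k:ℝ) * Pf (k+l) (2*k) θ) - 1/(2*(k:ℝ) * Pf (k+l) (2*k) 0)|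
        ≤ ((2:ℝ)^k * ↑(Nat.factorial k) / ((2:ℝ)^l * ↑(Nat.factorial l))) *
          (θ * (1/(2*(k:ℝ) * Pf (k+l) (2*k) 0))) := mul_le_mul_of_nonneg_left i3 hK.le
      _ = θ * (((2:ℝ)^k * ↑(Nat.factorial k) / ((2:ℝ)^l * ↑(Nat.factorial l))) *
          (1/(2*(k:ℝ) * Pf (k+l) (2*k) 0))) := by ring

lemma nonneg_of_sand {c x y : ℝ} (hc : c < 1) (h1 : c*x ≤ y) (h2 : y ≤ x) : 0 ≤ x := by
  by_contra h
  push_neg at h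
  have := mul_lt_mul_of_neg_right hc h
  linarith

lemma term_bounds {θ c c0 a a0 Q E : ℝ} (hθ0 : 0 ≤ θ) (hQ : 0 ≤ Q) (hE : 0 < E)
    (hc0 : 0 ≤ c0) (hc1 : (1/2)*c0 ≤ c) (hc2 : c ≤ c0) (hcd : |c - c0| ≤ θ*c0)
    (ha0 : 0 ≤ a0) (ha1 : (1/E)*a0 ≤ a) (ha2 : a ≤ a0) (had : |a - a0| ≤ θ*Q*a0) :
    (1/(2*E))*(c0*a0) ≤ c*a ∧ c*a ≤ c0*a0 ∧ |c*a - c0*a0| ≤ θ*(Q+1)*(c0*a0) := by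
  have hInv : 0 < 1/E := by positivity
  have haa : 0 ≤ a := le_trans (by positivity) ha1
  have hca : 0 ≤ c := le_trans (by positivity) hc1
  obtain ⟨hcd1, hcd2⟩ := abs_le.mp hcd
  obtain ⟨had1, had2⟩ := abs_le.mp had
  have hEeq : (1/(2*E))*(c0*a0) = ((1/2)*c0)*((1/E)*a0) := by
    field_simp
  refine ⟨?_, mul_le_mul hc2 ha2 haa hc0, abs_le.mpr ⟨?_, ?_⟩⟩
  · rw [hEeq]
    exact mul_le_mul hc1 ha1 (by positivity) hca
  · nlinarith [mul_le_mul_of_nonneg_left had1 hca, mul_le_mul_of_nonneg_right hc2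
      (mul_nonneg (mul_nonneg hθ0 hQ) ha0), mul_le_mul_of_nonneg_right hcd1 ha0]
  · nlinarith [mul_le_mul_of_nonneg_left had2 hca, mul_le_mul_of_nonneg_right hc2
      (mul_nonneg (mul_nonneg hθ0 hQ) ha0), mul_le_mul_of_nonneg_right hcd2 ha0]

/-- `A_{k,p}(θ)`: `A_{k,1}(θ) = ((2k+θ)/(2k)) 2^k k! Γ(k+θ)/Γ(2k+1+θ)` and,
for `p ≥ 2`,
`A_{k,p}(θ) = ∑_{l=p-1}^{k-1} ((2k+θ)/(2k)) (2^k k!/(2^l l!)) (Γ(k+l+θ)/Γ(2k+1+θ)) A_{l,p-1}(θ)`. -/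
noncomputable def Ath : ℕ → ℕ → ℝ → ℝ
  | _, 0, _ => 0
  | k, 1, θ => (2 * (k : ℝ) + θ) / (2 * k) *
      ((2 : ℝ) ^ k * (Nat.factorial k : ℝ) * Real.Gamma ((k : ℝ) + θ) /
        Real.Gamma (2 * (k : ℝ) + 1 + θ))
  | k, p + 2, θ => ∑ l ∈ Finset.Ico (p + 1) k,
      (2 * (k : ℝ) + θ) / (2 * k) *
        ((2 : ℝ) ^ k * (Nat.factorial k : ℝ) / ((2 : ℝ) ^ l * (Nat.factorial l : ℝ))) *
        (Real.Gamma ((k : ℝ) + l + θ) / Real.Gamma (2 * (k : ℝ) + 1 + θ)) *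
        Ath l (p + 1) θ

lemma Ath_one_eq (k : ℕ) (hk : 1 ≤ k) (t : ℝ) (ht : 0 ≤ t) : Ath k 1 t = Cc k 0 t := by
  show (2 * (k : ℝ) + t) / (2 * k) *
      ((2 : ℝ) ^ k * (Nat.factorial k : ℝ) * Real.Gamma ((k : ℝ) + t) /
        Real.Gamma (2 * (k : ℝ) + 1 + t)) = _
  have hg := g_eq k k hk hk (by omega) t ht
  unfold Cc
  simp only [Nat.add_zero, pow_zero, Nat.factorial_zero, Nat.cast_one, mul_one, one_mul]
  rw [← hg]
  ring

lemma Ath_succ_eq (k m : ℕ) (hk : 1 ≤ k) (t : ℝ) (ht : 0 ≤ t) :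
    Ath k (m+2) t = ∑ l ∈ Finset.Ico (m+1) k, Cc k l t * Ath l (m+1) t := by
  show (∑ l ∈ Finset.Ico (m + 1) k, _) = _
  apply Finset.sum_congr rfl
  intro l hl
  obtain ⟨hl1, hl2⟩ := Finset.mem_Ico.mp hl
  have hg := g_eq k (k+l) hk (by omega) (by omega) t ht
  have hcast : ((k+l:ℕ):ℝ) + t = (k:ℝ) + (l:ℝ) + t := by push_cast; ring
  rw [hcast] at hg
  unfold Cc
  rw [← hg]
  ring

/-- For fixed `p ≥ 1`, all `θ ∈ [0,1]` and all `k ≥ p`: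
`(1/2^p) A_{k,p} ≤ A_{k,p}(θ) ≤ A_{k,p}` and `|A_{k,p}(θ) - A_{k,p}| ≤ θ p A_{k,p}`,
where `A_{k,p} = A_{k,p}(0)`. -/
theorem Ath_bounds (p : ℕ) (hp : 1 ≤ p) (θ : ℝ) (hθ : θ ∈ Set.Icc (0 : ℝ) 1)
    (k : ℕ) (hk : p ≤ k) :
    ((1 / 2 ^ p) * Ath k p 0 ≤ Ath k p θ ∧ Ath k p θ ≤ Ath k p 0) ∧
    |Ath k p θ - Ath k p 0| ≤ θ * p * Ath k p 0 := by
  obtain ⟨hθ0, hθ1⟩ := hθ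
  induction p, hp using Nat.le_induction generalizing k with
  | base =>
    have hb := Cc_bounds k 0 hk (by omega) hθ0 hθ1
    rw [Ath_one_eq k hk θ hθ0, Ath_one_eq k hk 0 le_rfl]
    obtain ⟨hb0, hb1, hb2, hb3⟩ := hb
    norm_num
    exact ⟨⟨by linarith, hb2⟩, by linarith [hb3]⟩
  | succ n hn IH =>
    obtain ⟨m, rfl⟩ : ∃ m, n = m + 1 := ⟨n - 1, by omega⟩
    have hk1 : 1 ≤ k := by omega
    rw [Ath_succ_eq k m hk1 θ hθ0, Ath_succ_eq k m hk1 0 le_rfl]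
    -- per-term facts
    have key : ∀ l ∈ Finset.Ico (m+1) k,
        (1/(2*(2:ℝ)^(m+1))) * (Cc k l 0 * Ath l (m+1) 0) ≤ Cc k l θ * Ath l (m+1) θ ∧
        Cc k l θ * Ath l (m+1) θ ≤ Cc k l 0 * Ath l (m+1) 0 ∧
        |Cc k l θ * Ath l (m+1) θ - Cc k l 0 * Ath l (m+1) 0| ≤
          θ * (((m+1:ℕ):ℝ)+1) * (Cc k l 0 * Ath l (m+1) 0) := by
      intro l hl
      obtain ⟨hl1, hl2⟩ := Finset.mem_Ico.mp hl
      obtain ⟨⟨ia1, ia2⟩, ia3⟩ := IH l hl1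
      obtain ⟨ic0, ic1, ic2, ic3⟩ := Cc_bounds k l hk1 (by omega) hθ0 hθ1
      have ha0 : 0 ≤ Ath l (m+1) 0 := by
        refine nonneg_of_sand ?_ ia1 ia2
        rw [div_lt_one (by positivity)]
        exact one_lt_pow₀ one_lt_two (by omega)
      exact term_bounds hθ0 (by positivity) (by positivity : (0:ℝ) < (2:ℝ)^(m+1))
        ic0.le ic1 ic2 ic3 ha0 ia1 ia2 ia3
    have hsum0 : ∀ l ∈ Finset.Ico (m+1) k, (0:ℝ) ≤ Cc k l 0 * Ath l (m+1) 0 := by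
      intro l hl
      have h := key l hl
      refine nonneg_of_sand ?_ h.1 h.2.1
      rw [div_lt_one (by positivity)]
      have h12 : (1:ℝ) ≤ 2^(m+1) := one_le_pow₀ one_le_two
      linarith
    constructor
    constructor
    · calc (1 / 2^(m+1+1)) * ∑ l ∈ Finset.Ico (m+1) k, Cc k l 0 * Ath l (m+1) 0
          = ∑ l ∈ Finset.Ico (m+1) k, (1/(2*(2:ℝ)^(m+1))) * (Cc k l 0 * Ath l (m+1) 0) := by
            rw [Finset.mul_sum]
            apply Finset.sum_congr rfl
            intro l _
            rw [show ((2:ℝ)^(m+1+1)) = 2*(2:ℝ)^(m+1) by rw [pow_succ]; ring]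
        _ ≤ _ := Finset.sum_le_sum (fun l hl => (key l hl).1)
    · exact Finset.sum_le_sum (fun l hl => (key l hl).2.1)
    · calc |∑ l ∈ Finset.Ico (m+1) k, Cc k l θ * Ath l (m+1) θ -
            ∑ l ∈ Finset.Ico (m+1) k, Cc k l 0 * Ath l (m+1) 0|
          = |∑ l ∈ Finset.Ico (m+1) k,
              (Cc k l θ * Ath l (m+1) θ - Cc k l 0 * Ath l (m+1) 0)| := by
            rw [Finset.sum_sub_distrib]
        _ ≤ ∑ l ∈ Finset.Ico (m+1) k,
              |Cc k l θ * Ath l (m+1) θ - Cc k l 0 * Ath l (m+1) 0| :=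
            Finset.abs_sum_le_sum_abs _ _
        _ ≤ ∑ l ∈ Finset.Ico (m+1) k,
              θ * (((m+1:ℕ):ℝ)+1) * (Cc k l 0 * Ath l (m+1) 0) :=
            Finset.sum_le_sum (fun l hl => (key l hl).2.2)
        _ = θ * ((m+1+1:ℕ):ℝ) * ∑ l ∈ Finset.Ico (m+1) k, Cc k l 0 * Ath l (m+1) 0 := by
            rw [Finset.mul_sum]
            apply Finset.sum_congr rfl
            intro l _
            push_cast
            ring
end

section
/- Fix $\lambda > 0$ and an integer $l$ with $1 \leq l < \lambda$. Define $C_{k,l} = \sum_{s=0}^{k-l}\binom{k}{s}\left(\frac{\lambda-l}{\lambda}\right)^s A_{k-s,l}$, where $A_{k,l} \sim C_l\, k^{-l/2}\left(\frac{l}{l+1}\right)^k$ as $k\to\infty$ for some constant $C_l > 0$. Then $C_{k,l} \sim C_l\left(1 + \frac{(\lambda-l)(l+1)}{\lambda l}\right)^{l/2}\, k^{-l/2}\left(\frac{\lambda-l}{\lambda} + \frac{l}{l+1}\right)^k$ as $k \to \infty$. -/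
/-!
Write `p = (λ - l)/λ`, `q = l/(l + 1)`, `β = p/(p + q)` and `u m = A m / (C_l m^{-l/2} q^m) → 1`.
Dividing by `(p + q)^k` turns the convolution into the mean of `((1 - β) k/(k - s))^{l/2} u (k - s)`
under the binomial law `B(k, β)`. By Chernoff's bound this law gives mass at most `2 ρ^k`, `ρ < 1`,
to `|s - β k| ≥ η k`, which beats the polynomial growth of the averaged array; on the rest
`k - s → ∞` and `s/k → β`, so the array is close to `((1 - β)/(1 - β))^{l/2} · 1 = 1`.
-/

open Finset Filter Topology

noncomputable def binomialWeight (β : ℝ) (k s : ℕ) : ℝ :=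
  k.choose s * β ^ s * (1 - β) ^ (k - s)

section binomialWeight

variable {β : ℝ}

lemma binomialWeight_nonneg (hβ₀ : 0 ≤ β) (hβ₁ : β ≤ 1) (k s : ℕ) :
    0 ≤ binomialWeight β k s := by
  unfold binomialWeight
  have : 0 ≤ 1 - β := by linarith
  positivity

lemma sum_binomialWeight_mul_exp (θ : ℝ) (k : ℕ) :
    ∑ s ∈ range (k + 1), binomialWeight β k s * Real.exp (θ * s) =
      (1 + β * (Real.exp θ - 1)) ^ k := by
  rw [show 1 + β * (Real.exp θ - 1) = β * Real.exp θ + (1 - β) by ring, add_pow]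
  refine sum_congr rfl fun s _ => ?_
  rw [binomialWeight, mul_pow, ← Real.exp_nat_mul, mul_comm θ]
  ring

lemma sum_binomialWeight (k : ℕ) : ∑ s ∈ range (k + 1), binomialWeight β k s = 1 := by
  simpa using sum_binomialWeight_mul_exp (β := β) 0 k

/-- Chernoff's bound: on the event `θ s ≥ θ a k` the weight `e^{θ (s - a k)}` is at least `1`. -/
lemma sum_binomialWeight_filter_le (hβ₀ : 0 ≤ β) (hβ₁ : β ≤ 1) (θ a : ℝ) (k : ℕ) :
    ∑ s ∈ range (k + 1) with θ * (a * k) ≤ θ * ((s : ℕ) : ℝ), binomialWeight β k s ≤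
      ((1 + β * (Real.exp θ - 1)) * Real.exp (-(a * θ))) ^ k := by
  have hw := binomialWeight_nonneg hβ₀ hβ₁ k
  calc ∑ s ∈ range (k + 1) with θ * (a * k) ≤ θ * ((s : ℕ) : ℝ), binomialWeight β k s
      ≤ ∑ s ∈ range (k + 1) with θ * (a * k) ≤ θ * ((s : ℕ) : ℝ),
          binomialWeight β k s * Real.exp (θ * s - θ * (a * k)) := by
        refine sum_le_sum fun s hs => le_mul_of_one_le_right (hw s) ?_
        exact Real.one_le_exp (sub_nonneg.2 (mem_filter.1 hs).2)
    _ ≤ ∑ s ∈ range (k + 1), binomialWeight β k s * Real.exp (θ * s - θ * (a * k)) :=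
        sum_le_sum_of_subset_of_nonneg (filter_subset _ _) fun s _ _ => by
          have := hw s; positivity
    _ = ((1 + β * (Real.exp θ - 1)) * Real.exp (-(a * θ))) ^ k := by
        simp_rw [Real.exp_sub, div_eq_mul_inv, ← mul_assoc, ← sum_mul,
          sum_binomialWeight_mul_exp, mul_pow, ← Real.exp_nat_mul, ← Real.exp_neg]
        ring_nf

lemma one_add_mul_exp_sub_one_lt_exp (hβ₀ : 0 ≤ β) (hβ₁ : β ≤ 1) {θ a : ℝ} (hθ : |θ| ≤ 1)
    (h : θ ^ 2 < θ * (a - β)) : 1 + β * (Real.exp θ - 1) < Real.exp (a * θ) := by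
  have hexp : Real.exp θ - 1 ≤ θ + θ ^ 2 :=
    by linarith [(abs_le.1 (Real.abs_exp_sub_one_sub_id_le hθ)).2]
  calc 1 + β * (Real.exp θ - 1) ≤ 1 + β * θ + θ ^ 2 := by
        nlinarith [mul_le_mul_of_nonneg_left hexp hβ₀, sq_nonneg θ]
    _ < a * θ + 1 := by linarith
    _ ≤ Real.exp (a * θ) := Real.add_one_le_exp _

lemma exists_sum_binomialWeight_filter_le_pow (hβ₀ : 0 ≤ β) (hβ₁ : β ≤ 1) {θ a : ℝ}
    (hθ : |θ| ≤ 1) (h : θ ^ 2 < θ * (a - β)) : ∃ ρ, 0 ≤ ρ ∧ ρ < 1 ∧ ∀ k : ℕ,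
      ∑ s ∈ range (k + 1) with θ * (a * k) ≤ θ * ((s : ℕ) : ℝ), binomialWeight β k s ≤ ρ ^ k := by
  refine ⟨_, ?_, ?_, sum_binomialWeight_filter_le hβ₀ hβ₁ θ a⟩
  · have : 0 ≤ 1 + β * (Real.exp θ - 1) := by nlinarith [Real.exp_pos θ]
    positivity
  · rw [Real.exp_neg, ← div_eq_mul_inv, div_lt_one (Real.exp_pos _)]
    exact one_add_mul_exp_sub_one_lt_exp hβ₀ hβ₁ hθ h

lemma exists_sum_binomialWeight_far_le (hβ₀ : 0 ≤ β) (hβ₁ : β ≤ 1) {η : ℝ} (hη : 0 < η) :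
    ∃ ρ, 0 ≤ ρ ∧ ρ < 1 ∧ ∀ k : ℕ,
      ∑ s ∈ range (k + 1) with η * k ≤ |((s : ℕ) : ℝ) - β * k|, binomialWeight β k s ≤
        2 * ρ ^ k := by
  set θ := min 1 (η / 2)
  have hθ₀ : 0 < θ := lt_min one_pos (half_pos hη)
  have hθ₁ : θ ≤ 1 := min_le_left _ _
  have hθη : θ ≤ η / 2 := min_le_right _ _
  obtain ⟨ρ₁, hρ₁₀, hρ₁₁, hρ₁⟩ := exists_sum_binomialWeight_filter_le_pow (a := β + η) hβ₀ hβ₁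
    (by rwa [abs_of_pos hθ₀]) (by nlinarith)
  obtain ⟨ρ₂, hρ₂₀, hρ₂₁, hρ₂⟩ := exists_sum_binomialWeight_filter_le_pow (a := β - η) hβ₀ hβ₁
    (by rwa [abs_neg, abs_of_pos hθ₀]) (by nlinarith)
  refine ⟨max ρ₁ ρ₂, le_max_of_le_left hρ₁₀, max_lt hρ₁₁ hρ₂₁, fun k => ?_⟩
  have hw := binomialWeight_nonneg hβ₀ hβ₁ k
  rw [← sum_filter_add_sum_filter_not _ (fun s : ℕ => β * k ≤ s), two_mul]
  gcongr ?_ + ?_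
  · refine (sum_le_sum_of_subset_of_nonneg (fun s hs => ?_) fun s _ _ => hw s).trans
      ((hρ₁ k).trans (pow_le_pow_left₀ hρ₁₀ (le_max_left _ _) k))
    simp only [mem_filter] at hs ⊢
    refine ⟨hs.1.1, mul_le_mul_of_nonneg_left ?_ hθ₀.le⟩
    rw [abs_of_nonneg (sub_nonneg.2 hs.2)] at hs
    linarith [hs.1.2]
  · refine (sum_le_sum_of_subset_of_nonneg (fun s hs => ?_) fun s _ _ => hw s).trans
      ((hρ₂ k).trans (pow_le_pow_left₀ hρ₂₀ (le_max_right _ _) k))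
    simp only [mem_filter, not_le] at hs ⊢
    rw [abs_of_neg (sub_neg.2 hs.2)] at hs
    rw [neg_mul, neg_mul, neg_le_neg_iff]
    exact ⟨hs.1.1, mul_le_mul_of_nonneg_left (by linarith [hs.1.2]) hθ₀.le⟩

lemma abs_sum_binomialWeight_mul_sub_le (hβ₀ : 0 ≤ β) (hβ₁ : β ≤ 1) {k : ℕ} {h : ℕ → ℝ}
    {L η δ M : ℝ} (hδ : 0 ≤ δ)
    (hnear : ∀ s ≤ k, |(s : ℝ) - β * k| < η * k → |h s - L| ≤ δ)
    (hfar : ∀ s ≤ k, |h s - L| ≤ M) :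
    |∑ s ∈ range (k + 1), binomialWeight β k s * h s - L| ≤
      δ + M * ∑ s ∈ range (k + 1) with η * k ≤ |((s : ℕ) : ℝ) - β * k|,
        binomialWeight β k s := by
  have hw := binomialWeight_nonneg hβ₀ hβ₁ k
  have hk : ∀ s ∈ range (k + 1), s ≤ k := fun s hs => Nat.lt_succ_iff.1 (mem_range.1 hs)
  calc |∑ s ∈ range (k + 1), binomialWeight β k s * h s - L|
      = |∑ s ∈ range (k + 1), binomialWeight β k s * (h s - L)| := by
        simp_rw [mul_sub, sum_sub_distrib, ← sum_mul, sum_binomialWeight, one_mul]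
    _ ≤ ∑ s ∈ range (k + 1), binomialWeight β k s * |h s - L| := by
        refine (abs_sum_le_sum_abs _ _).trans_eq (sum_congr rfl fun s _ => ?_)
        rw [abs_mul, abs_of_nonneg (hw s)]
    _ = ∑ s ∈ range (k + 1) with η * k ≤ |((s : ℕ) : ℝ) - β * k|,
          binomialWeight β k s * |h s - L| +
        ∑ s ∈ range (k + 1) with ¬η * k ≤ |((s : ℕ) : ℝ) - β * k|,
          binomialWeight β k s * |h s - L| := (sum_filter_add_sum_filter_not _ _ _).symm
    _ ≤ M * ∑ s ∈ range (k + 1) with η * k ≤ |((s : ℕ) : ℝ) - β * k|, binomialWeight β k s +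
        δ * ∑ s ∈ range (k + 1), binomialWeight β k s := by
        rw [mul_sum, mul_sum]
        refine add_le_add (sum_le_sum fun s hs => ?_) ?_
        · rw [mul_comm M]
          exact mul_le_mul_of_nonneg_left (hfar s (hk s (mem_filter.1 hs).1)) (hw s)
        refine (sum_le_sum fun s hs => ?_).trans (sum_le_sum_of_subset_of_nonneg
          (filter_subset _ _) fun s _ _ => mul_nonneg hδ (hw s))
        obtain ⟨hs, hnear_s⟩ := mem_filter.1 hs
        rw [mul_comm δ]
        exact mul_le_mul_of_nonneg_left (hnear s (hk s hs) (not_le.1 hnear_s)) (hw s)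
    _ = δ + M * ∑ s ∈ range (k + 1) with η * k ≤ |((s : ℕ) : ℝ) - β * k|,
          binomialWeight β k s := by
        rw [sum_binomialWeight, mul_one, add_comm]

end binomialWeight

noncomputable def binomialBulk (β : ℝ) : Filter (ℕ × ℕ) :=
  atTop.comap Prod.fst ⊓ (𝓝 β).comap fun ks => (ks.2 : ℝ) / ks.1

section binomialBulk

variable {β : ℝ}

lemma tendsto_fst_binomialBulk : Tendsto Prod.fst (binomialBulk β) atTop :=
  tendsto_inf_left tendsto_comap

lemma tendsto_snd_div_fst_binomialBulk :
    Tendsto (fun ks : ℕ × ℕ => (ks.2 : ℝ) / ks.1) (binomialBulk β) (𝓝 β) :=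
  tendsto_inf_right tendsto_comap

lemma eventually_cast_sub_binomialBulk (hβ : β < 1) :
    ∀ᶠ ks : ℕ × ℕ in binomialBulk β,
      ((ks.1 - ks.2 : ℕ) : ℝ) = ks.1 * (1 - (ks.2 : ℝ) / ks.1) ∧ (0 : ℝ) < ks.1 := by
  filter_upwards [tendsto_fst_binomialBulk.eventually_ge_atTop 1,
    tendsto_snd_div_fst_binomialBulk.eventually (gt_mem_nhds hβ)] with ⟨k, s⟩ hk hsk
  have hk₀ : (0 : ℝ) < k := by exact_mod_cast hk
  have hs : s ≤ k := by exact_mod_cast ((div_lt_one hk₀).1 hsk).le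
  refine ⟨?_, hk₀⟩
  rw [Nat.cast_sub hs, mul_sub, mul_one, mul_div_cancel₀ _ hk₀.ne']

lemma tendsto_sub_binomialBulk (hβ : β < 1) :
    Tendsto (fun ks : ℕ × ℕ => ks.1 - ks.2) (binomialBulk β) atTop := by
  rw [← tendsto_natCast_atTop_iff (R := ℝ)]
  refine Tendsto.congr' ((eventually_cast_sub_binomialBulk hβ).mono fun _ h => h.1.symm) ?_
  exact (tendsto_natCast_atTop_atTop.comp tendsto_fst_binomialBulk).atTop_mul_pos
    (sub_pos.2 hβ) (tendsto_snd_div_fst_binomialBulk.const_sub 1)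

lemma tendsto_rpow_div_sub_binomialBulk (hβ : β < 1) (a : ℝ) :
    Tendsto (fun ks : ℕ × ℕ => ((1 - β) * ks.1 / (ks.1 - ks.2 : ℕ)) ^ a) (binomialBulk β)
      (𝓝 1) := by
  have hβ' : 1 - β ≠ 0 := (sub_pos.2 hβ).ne'
  have := (tendsto_const_nhds (x := 1 - β)).div
    (tendsto_snd_div_fst_binomialBulk.const_sub 1) hβ'
  rw [div_self hβ'] at this
  have := this.rpow_const (p := a) (.inl one_ne_zero)
  rw [Real.one_rpow] at this
  refine this.congr' ((eventually_cast_sub_binomialBulk hβ).mono fun ks h => ?_)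
  simp only [Pi.div_apply]
  rw [h.1, mul_comm (ks.1 : ℝ), mul_div_mul_right _ _ h.2.ne']

end binomialBulk

theorem tendsto_sum_binomialWeight_mul {β : ℝ} (hβ₀ : 0 ≤ β) (hβ₁ : β ≤ 1) {h : ℕ → ℕ → ℝ}
    {L C : ℝ} {N : ℕ} (hbound : ∀ᶠ k in atTop, ∀ s ≤ k, |h k s| ≤ C * k ^ N)
    (hlim : Tendsto (fun ks : ℕ × ℕ => h ks.1 ks.2) (binomialBulk β) (𝓝 L)) :
    Tendsto (fun k => ∑ s ∈ range (k + 1), binomialWeight β k s * h k s) atTop (𝓝 L) := by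
  rw [Metric.tendsto_nhds]
  intro ε hε
  obtain ⟨⟨K, η⟩, ⟨-, hη⟩, hKη⟩ :=
    ((atTop_basis.comap Prod.fst).inf (Metric.nhds_basis_ball.comap _)).tendsto_left_iff.1
      hlim _ (Metric.ball_mem_nhds L (half_pos hε))
  obtain ⟨ρ, hρ₀, hρ₁, hfar⟩ := exists_sum_binomialWeight_far_le hβ₀ hβ₁ hη
  have hdecay : Tendsto (fun k : ℕ => (C * k ^ N + |L|) * (2 * ρ ^ k)) atTop (𝓝 0) := by
    have hρ : |ρ| < 1 := by rwa [abs_of_nonneg hρ₀]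
    simpa [mul_add, add_mul, mul_assoc, mul_left_comm] using
      ((tendsto_pow_const_mul_const_pow_of_abs_lt_one N hρ).const_mul (2 * C)).add
        ((tendsto_pow_atTop_nhds_zero_of_lt_one hρ₀ hρ₁).const_mul (2 * |L|))
  filter_upwards [hbound, eventually_ge_atTop (max K 1),
    hdecay.eventually (gt_mem_nhds (half_pos hε))] with k hbound_k hk hdecay_k
  have hk₀ : (0 : ℝ) < k := by exact_mod_cast (le_max_right K 1).trans hk
  have hnear : ∀ s ≤ k, |(s : ℝ) - β * k| < η * k → |h k s - L| ≤ ε / 2 := by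
    intro s _ hs
    have hmem := hKη (x := (k, s)) ⟨(le_max_left K 1).trans hk, ?_⟩
    · exact (mem_ball_iff_norm.1 hmem).le
    · simp only [Set.mem_preimage, Metric.mem_ball, Real.dist_eq]
      rwa [div_sub' hk₀.ne', abs_div, abs_of_pos hk₀, div_lt_iff₀ hk₀, mul_comm (k : ℝ)]
  have hfar_k : ∀ s ≤ k, |h k s - L| ≤ C * k ^ N + |L| := fun s hs =>
    (abs_sub _ _).trans (add_le_add_left (hbound_k s hs) _)
  rw [Real.dist_eq]
  calc _ ≤ ε / 2 + (C * k ^ N + |L|) *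
          ∑ s ∈ range (k + 1) with η * k ≤ |((s : ℕ) : ℝ) - β * k|, binomialWeight β k s :=
        abs_sum_binomialWeight_mul_sub_le hβ₀ hβ₁ (half_pos hε).le hnear hfar_k
    _ ≤ ε / 2 + (C * k ^ N + |L|) * (2 * ρ ^ k) := by
        gcongr
        · exact (abs_nonneg _).trans (hfar_k 0 k.zero_le)
        · exact hfar k
    _ < ε := by linarith

/-- The `s`-th summand of the normalized convolution divided by `binomialWeight β k s`, where
`u m = A m / (C_l m^{-l/2} q^m)`. -/
noncomputable def binomialConvolutionTerm (β a : ℝ) (l : ℕ) (u : ℕ → ℝ) (k s : ℕ) : ℝ :=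
  if s + l ≤ k then ((1 - β) * k / (k - s : ℕ)) ^ a * u (k - s) else 0

section binomialConvolutionTerm

variable {β a : ℝ} {l : ℕ} {u : ℕ → ℝ}

lemma tendsto_binomialConvolutionTerm (hβ : β < 1) (hu : Tendsto u atTop (𝓝 1)) :
    Tendsto (fun ks : ℕ × ℕ => binomialConvolutionTerm β a l u ks.1 ks.2) (binomialBulk β)
      (𝓝 1) := by
  have hsub := tendsto_sub_binomialBulk hβ
  rw [← mul_one (1 : ℝ)]
  refine ((tendsto_rpow_div_sub_binomialBulk hβ a).mul (hu.comp hsub)).congr' ?_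
  -- `l + 1`, not `l`: a truncated difference `k - s ≥ 1` certifies `s < k`
  filter_upwards [hsub.eventually_ge_atTop (l + 1)] with ks hks
  rw [binomialConvolutionTerm, if_pos (by omega)]
  rfl

lemma exists_abs_binomialConvolutionTerm_le (hβ₀ : 0 ≤ β) (hβ₁ : β ≤ 1) (ha : 0 ≤ a) {c : ℝ}
    (hu : Tendsto u atTop (𝓝 c)) :
    ∃ C, ∀ᶠ k in atTop, ∀ s ≤ k, |binomialConvolutionTerm β a l u k s| ≤ C * k ^ ⌈a⌉₊ := by
  obtain ⟨B, hB⟩ := hu.abs.bddAbove_range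
  refine ⟨B, (eventually_ge_atTop 1).mono fun k hk s hs => ?_⟩
  have hk : (1 : ℝ) ≤ k := by exact_mod_cast hk
  have huB : |u (k - s)| ≤ B := hB ⟨k - s, rfl⟩
  unfold binomialConvolutionTerm
  split_ifs with hsl
  · have hbase : (1 - β) * k / (k - s : ℕ) ≤ k := by
      rcases Nat.eq_zero_or_pos (k - s) with h₀ | h₁
      · rw [h₀, Nat.cast_zero, div_zero]
        positivity
      · refine div_le_of_le_mul₀ (by positivity) (by positivity) ?_
        have : (1 : ℝ) ≤ (k - s : ℕ) := by exact_mod_cast h₁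
        nlinarith
    rw [abs_mul, abs_of_nonneg (by positivity), mul_comm]
    refine mul_le_mul huB ?_ (by positivity) ((abs_nonneg _).trans huB)
    calc ((1 - β) * k / (k - s : ℕ)) ^ a ≤ (k : ℝ) ^ a :=
          Real.rpow_le_rpow (by have := sub_nonneg.2 hβ₁; positivity) hbase ha
      _ ≤ (k : ℝ) ^ (⌈a⌉₊ : ℝ) := Real.rpow_le_rpow_of_exponent_le hk (Nat.le_ceil a)
      _ = (k : ℝ) ^ ⌈a⌉₊ := Real.rpow_natCast _ _
  · rw [abs_zero]
    exact mul_nonneg ((abs_nonneg _).trans huB) (by positivity)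

end binomialConvolutionTerm

lemma div_eq_sum_binomialWeight_mul_binomialConvolutionTerm {p q Cl : ℝ} (hp : 0 < p)
    (hq : 0 < q) (hCl : Cl ≠ 0) {l k : ℕ} (hl : 1 ≤ l) (hlk : l ≤ k) (A : ℕ → ℝ) :
    (∑ s ∈ range (k - l + 1), (k.choose s : ℝ) * p ^ s * A (k - s)) /
        (Cl * ((p + q) / q) ^ ((l : ℝ) / 2) * (k : ℝ) ^ (-(l : ℝ) / 2) * (p + q) ^ k) =
      ∑ s ∈ range (k + 1), binomialWeight (p / (p + q)) k s *
        binomialConvolutionTerm (p / (p + q)) ((l : ℝ) / 2) l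
          (fun m => A m / (Cl * (m : ℝ) ^ (-(l : ℝ) / 2) * q ^ m)) k s := by
  have hpq : 0 < p + q := add_pos hp hq
  have hβ : 1 - p / (p + q) = q / (p + q) := by field_simp; ring
  symm
  rw [sum_div, ← sum_subset (range_subset_range.2 (by omega : k - l + 1 ≤ k + 1))]
  · refine sum_congr rfl fun s hs => ?_
    have hsk : s + l ≤ k := by have := mem_range.1 hs; omega
    have hks : (0 : ℝ) < (k - s : ℕ) := by exact_mod_cast (by omega : 0 < k - s)
    have hk : (0 : ℝ) < k := by exact_mod_cast (by omega : 0 < k)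
    rw [binomialWeight, binomialConvolutionTerm, if_pos hsk, hβ, neg_div, Real.rpow_neg hk.le,
      Real.rpow_neg hks.le, Real.div_rpow (by positivity) hq.le,
      Real.div_rpow (by positivity) hks.le, Real.mul_rpow (by positivity) hk.le,
      Real.div_rpow hq.le hpq.le, div_pow, div_pow,
      ← Nat.sub_add_cancel (by omega : s ≤ k), pow_add, Nat.add_sub_cancel]
    field_simp
  · intro s _ hs
    rw [binomialConvolutionTerm, if_neg (by have := mem_range.not.1 hs; omega), mul_zero]

theorem binomial_convolution_asymptotics_general (lam : ℝ)
    (l : ℕ) (hl : 1 ≤ l) (hll : (l : ℝ) < lam)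
    (Cl : ℝ) (hCl : 0 < Cl) (A : ℕ → ℝ)
    (hA : Tendsto (fun k : ℕ =>
        A k / (Cl * (k : ℝ) ^ (-(l : ℝ) / 2) * ((l : ℝ) / ((l : ℝ) + 1)) ^ k))
      atTop (nhds 1)) :
    Tendsto (fun k : ℕ =>
        (∑ s ∈ Finset.range (k - l + 1),
            (Nat.choose k s : ℝ) * ((lam - l) / lam) ^ s * A (k - s)) /
          (Cl * (1 + (lam - l) * ((l : ℝ) + 1) / (lam * l)) ^ ((l : ℝ) / 2) *
            (k : ℝ) ^ (-(l : ℝ) / 2) *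
            ((lam - l) / lam + (l : ℝ) / ((l : ℝ) + 1)) ^ k))
      atTop (nhds 1) := by
  have hl₀ : (0 : ℝ) < l := by exact_mod_cast hl
  have hlam : 0 < lam := hl₀.trans hll
  set p := (lam - l) / lam
  set q := (l : ℝ) / (l + 1)
  have hp : 0 < p := div_pos (sub_pos.2 hll) hlam
  have hq : 0 < q := by positivity
  have hβ₀ : 0 ≤ p / (p + q) := by positivity
  have hβ₁ : p / (p + q) < 1 := (div_lt_one (by positivity)).2 (by linarith)
  have hX : 1 + (lam - l) * (l + 1) / (lam * l) = (p + q) / q := by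
    simp only [p, q]; field_simp; ring
  rw [hX]
  obtain ⟨C, hC⟩ := exists_abs_binomialConvolutionTerm_le (l := l) hβ₀ hβ₁.le
    (by positivity : (0 : ℝ) ≤ l / 2) hA
  refine (tendsto_sum_binomialWeight_mul hβ₀ hβ₁.le hC
    (tendsto_binomialConvolutionTerm hβ₁ hA)).congr' ?_
  filter_upwards [eventually_ge_atTop l] with k hk
  exact (div_eq_sum_binomialWeight_mul_binomialConvolutionTerm hp hq hCl.ne' hl hk A).symm

/-- Binomial convolution asymptotics: if `A_k ~ C_l k^{-l/2} (l/(l+1))^k`, then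
`C_{k,l} = ∑_{s=0}^{k-l} C(k,s) ((λ-l)/λ)^s A_{k-s}` satisfies
`C_{k,l} ~ C_l (1 + (λ-l)(l+1)/(λ l))^{l/2} k^{-l/2} ((λ-l)/λ + l/(l+1))^k`. -/
theorem binomial_convolution_asymptotics (lam : ℝ) (hlam : 0 < lam)
    (l : ℕ) (hl : 1 ≤ l) (hll : (l : ℝ) < lam)
    (Cl : ℝ) (hCl : 0 < Cl) (A : ℕ → ℝ)
    (hA : Tendsto (fun k : ℕ =>
        A k / (Cl * (k : ℝ) ^ (-(l : ℝ) / 2) * ((l : ℝ) / ((l : ℝ) + 1)) ^ k))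
      atTop (nhds 1)) :
    Tendsto (fun k : ℕ =>
        (∑ s ∈ Finset.range (k - l + 1),
            (Nat.choose k s : ℝ) * ((lam - l) / lam) ^ s * A (k - s)) /
          (Cl * (1 + (lam - l) * ((l : ℝ) + 1) / (lam * l)) ^ ((l : ℝ) / 2) *
            (k : ℝ) ^ (-(l : ℝ) / 2) *
            ((lam - l) / lam + (l : ℝ) / ((l : ℝ) + 1)) ^ k))
      atTop (nhds 1) :=
  binomial_convolution_asymptotics_general lam l hl hll Cl hCl A hA
end

section
/- Let $\lambda > 2$ and define $f(x) = \frac{\lambda - x}{\lambda} + \frac{x}{x+1}$ for $x \geq 0$. Let $u \geq 2$ be the integer with $u(u-1) < \lambda \leq u(u+1)$. Then $f$ restricted to integers $1 \leq l \leq \lfloor\lambda\rfloor$ attains its maximum at $l = u-1$; moreover $f(l) < f(u-1)$ for all integers $1 \leq l \leq \lfloor\lambda\rfloor$ with $l \neq u-1$, except that $f(u) = f(u-1)$ in the critical case $\lambda = u(u+1)$. -/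
/-- Maximizing `f(x) = (λ-x)/λ + x/(x+1)` over integers `1 ≤ l ≤ ⌊λ⌋`:
with `u ≥ 2` such that `u(u-1) < λ ≤ u(u+1)`, the maximum is attained at
`l = u-1`, strictly except that `f(u) = f(u-1)` exactly when `λ = u(u+1)`. -/
theorem f_max_at_u_sub_one (lam : ℝ) (hlam : 2 < lam) (u : ℕ) (hu : 2 ≤ u)
    (h1 : (u : ℝ) * ((u : ℝ) - 1) < lam) (h2 : lam ≤ (u : ℝ) * ((u : ℝ) + 1)) :
    (∀ l : ℕ, 1 ≤ l → l ≤ Nat.floor lam →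
      (lam - l) / lam + (l : ℝ) / ((l : ℝ) + 1)
        ≤ (lam - ((u : ℝ) - 1)) / lam + ((u : ℝ) - 1) / (u : ℝ)) ∧
    (∀ l : ℕ, 1 ≤ l → l ≤ Nat.floor lam → l ≠ u - 1 →
      ¬(lam = (u : ℝ) * ((u : ℝ) + 1) ∧ l = u) →
      (lam - l) / lam + (l : ℝ) / ((l : ℝ) + 1)
        < (lam - ((u : ℝ) - 1)) / lam + ((u : ℝ) - 1) / (u : ℝ)) ∧
    (lam = (u : ℝ) * ((u : ℝ) + 1) →
      (lam - u) / lam + (u : ℝ) / ((u : ℝ) + 1)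
        = (lam - ((u : ℝ) - 1)) / lam + ((u : ℝ) - 1) / (u : ℝ)) := by
  have hlam0 : (0:ℝ) < lam := by linarith
  have hu2 : (2:ℝ) ≤ (u:ℝ) := by exact_mod_cast hu
  have hu0 : (0:ℝ) < (u:ℝ) := by linarith
  have key : ∀ x : ℝ, 0 < x + 1 →
      (lam - x)/lam + x/(x+1) - ((lam - ((u:ℝ)-1))/lam + ((u:ℝ)-1)/(u:ℝ))
        = ((u:ℝ)-1-x)*(1/lam - 1/((x+1)*(u:ℝ))) := by
    intro x hx
    field_simp
    ring
  -- sign analysis for a natural l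
  have sign : ∀ l : ℕ, 1 ≤ l →
      (l ≠ u - 1 → ¬(lam = (u : ℝ) * ((u : ℝ) + 1) ∧ l = u) →
        ((u:ℝ)-1-(l:ℝ))*(1/lam - 1/(((l:ℝ)+1)*(u:ℝ))) < 0) ∧
      ((u:ℝ)-1-(l:ℝ))*(1/lam - 1/(((l:ℝ)+1)*(u:ℝ))) ≤ 0 := by
    intro l hl1
    have hx : (0:ℝ) < (l:ℝ) + 1 := by positivity
    rcases lt_trichotomy l (u-1) with h | h | h
    · -- l ≤ u-2, so (l+1)*u ≤ (u-1)*u < lam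
      have hl' : (l:ℝ) + 1 ≤ (u:ℝ) - 1 := by
        have : l + 1 ≤ u - 1 := h
        have : (l:ℝ) + 1 ≤ ((u:ℝ) - 1) := by
          have h' : l + 2 ≤ u := by omega
          have : ((l:ℝ) + 2) ≤ (u:ℝ) := by exact_mod_cast h'
          linarith
        exact this
      have hprod : ((l:ℝ)+1)*(u:ℝ) < lam := by nlinarith
      have h1' : 1/lam < 1/(((l:ℝ)+1)*(u:ℝ)) := by
        apply one_div_lt_one_div_of_lt
        · positivity
        · exact hprod
      have hpos : (0:ℝ) < (u:ℝ)-1-(l:ℝ) := by linarith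
      constructor
      · intro _ _
        nlinarith
      · nlinarith
    · -- l = u-1: both factors vanish in product? first factor is zero
      have : (l:ℝ) = (u:ℝ) - 1 := by
        have h' : l + 1 = u := by omega
        have : ((l:ℝ) + 1) = (u:ℝ) := by exact_mod_cast h'
        linarith
      constructor
      · intro hne _
        exact absurd h hne
      · rw [this]; ring_nf; simp
    · -- l ≥ u
      have hl' : u ≤ l := by omega
      have hlu : (u:ℝ) ≤ (l:ℝ) := by exact_mod_cast hl'
      have hneg : (u:ℝ)-1-(l:ℝ) < 0 := by linarith
      have hge : lam ≤ ((l:ℝ)+1)*(u:ℝ) := by nlinarith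
      have h1' : 1/(((l:ℝ)+1)*(u:ℝ)) ≤ 1/lam := by
        apply one_div_le_one_div_of_le hlam0 hge
      constructor
      · intro _ hnc
        have hstrict : lam < ((l:ℝ)+1)*(u:ℝ) := by
          rcases eq_or_lt_of_le hl' with he | hlt
          · -- l = u, so not critical: lam < u(u+1)
            have hne : lam ≠ (u:ℝ)*((u:ℝ)+1) := by
              intro hc; exact hnc ⟨hc, he.symm⟩
            have : lam < (u:ℝ)*((u:ℝ)+1) := lt_of_le_of_ne h2 hne
            have hle : (l:ℝ) = (u:ℝ) := by exact_mod_cast he.symm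
            rw [hle]; linarith
          · have : (u:ℝ) + 1 ≤ (l:ℝ) := by exact_mod_cast hlt
            nlinarith
        have h1'' : 1/(((l:ℝ)+1)*(u:ℝ)) < 1/lam := by
          apply one_div_lt_one_div_of_lt hlam0 hstrict
        nlinarith
      · nlinarith
  refine ⟨?_, ?_, ?_⟩
  · intro l hl1 _
    have hx : (0:ℝ) < (l:ℝ) + 1 := by positivity
    have := (sign l hl1).2
    have hk := key (l:ℝ) hx
    linarith [hk ▸ this]
  · intro l hl1 _ hne hnc
    have hx : (0:ℝ) < (l:ℝ) + 1 := by positivity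
    have := (sign l hl1).1 hne hnc
    have hk := key (l:ℝ) hx
    linarith [hk ▸ this]
  · intro hc
    have hx : (0:ℝ) < (u:ℝ) + 1 := by positivity
    have hk := key (u:ℝ) hx
    have : ((u:ℝ)-1-(u:ℝ))*(1/lam - 1/(((u:ℝ)+1)*(u:ℝ))) = 0 := by
      rw [hc]; field_simp; ring
    linarith [hk ▸ this]
end

section
/- Let $X_k \sim B(k,\beta)$ be binomial with $\beta \in (0,1)$, let $l \geq 1$ be a fixed integer, and set $s_0 = \beta k$. Then $\lim_{k\to\infty} s_0^{l/2} \sum_{s=0}^{k-l} (k-s)^{-l/2} P(X_k = s) = \left(\frac{\beta}{1-\beta}\right)^{l/2}$. -/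
/-!
Write the summand as `(βk / (k - s))^p · P(X_k = s)`. On the window `|s - βk| < δk` the weight
lies between `(β / (1 - β + δ))^p` and `(β / (1 - β - δ))^p`, and the window carries almost all
of the mass. Outside it the weight is at most `(βk)^p`, while Chernoff bounds make the binomial
tails exponentially small, so they contribute nothing in the limit. Letting `δ → 0` squeezes the
sum to `(β / (1 - β))^p`.
-/

open Finset Filter Topology

noncomputable def binomProb (β : ℝ) (k s : ℕ) : ℝ :=
  k.choose s * β ^ s * (1 - β) ^ (k - s)

section binomProb

variable {β : ℝ}

lemma binomProb_nonneg (h0 : 0 ≤ β) (h1 : β ≤ 1) (k s : ℕ) : 0 ≤ binomProb β k s := by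
  have : 0 ≤ 1 - β := by linarith
  unfold binomProb; positivity

lemma sum_binomProb_mul_pow (β x : ℝ) (k : ℕ) :
    ∑ s ∈ range (k + 1), binomProb β k s * x ^ s = (β * x + (1 - β)) ^ k := by
  rw [add_pow]
  refine sum_congr rfl fun s _ => ?_
  rw [binomProb, mul_pow]
  ring

lemma sum_binomProb (β : ℝ) (k : ℕ) : ∑ s ∈ range (k + 1), binomProb β k s = 1 := by
  simpa using sum_binomProb_mul_pow β 1 k

lemma sum_binomProb_filter_le (h0 : 0 ≤ β) (h1 : β ≤ 1) {x : ℝ} (hx : 0 < x) (a : ℝ) (k : ℕ)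
    (P : ℕ → Prop) [DecidablePred P] (hP : ∀ s, P s → 1 ≤ x ^ ((s : ℝ) - a * k)) :
    ∑ s ∈ range (k + 1) with P s, binomProb β k s ≤ ((β * x + (1 - β)) * x ^ (-a)) ^ k := by
  have hpow : ((β * x + (1 - β)) * x ^ (-a)) ^ k
      = ∑ s ∈ range (k + 1), x ^ ((s : ℝ) - a * k) * binomProb β k s := by
    rw [mul_pow, ← sum_binomProb_mul_pow, sum_mul]
    refine sum_congr rfl fun s _ => ?_
    rw [sub_eq_add_neg, Real.rpow_add hx, Real.rpow_natCast, ← neg_mul, Real.rpow_mul hx.le,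
      Real.rpow_natCast]
    ring
  rw [hpow, sum_filter]
  refine sum_le_sum fun s _ => ?_
  have hb := binomProb_nonneg h0 h1 k s
  split_ifs with hs
  · exact le_mul_of_one_le_left hb (hP s hs)
  · positivity

end binomProb

lemma HasDerivAt.eventually_nhdsGT_lt {f : ℝ → ℝ} {f' x : ℝ} (hf : HasDerivAt f f' x)
    (h : f' < 0) : ∀ᶠ z in 𝓝[>] x, f z < f x := by
  filter_upwards [hf.hasDerivWithinAt.limsup_slope_le' (lt_irrefl x) h,
    self_mem_nhdsWithin] with z hslope hz
  rw [slope_def_field, div_neg_iff] at hslope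
  rcases hslope with ⟨-, hneg⟩ | ⟨hfz, -⟩
  · exact absurd hz.le (not_le.2 (sub_neg.1 hneg))
  · linarith

lemma HasDerivAt.eventually_nhdsLT_lt {f : ℝ → ℝ} {f' x : ℝ} (hf : HasDerivAt f f' x)
    (h : 0 < f') : ∀ᶠ z in 𝓝[<] x, f z < f x := by
  have hslope : ∀ᶠ z in 𝓝[<] x, 0 < slope f x z :=
    (hasDerivAt_iff_tendsto_slope.1 hf).eventually_const_lt h |>.filter_mono
      (nhdsWithin_mono _ fun z hz => ne_of_lt hz)
  filter_upwards [hslope, self_mem_nhdsWithin] with z hslope hz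
  rw [slope_def_field, div_pos_iff] at hslope
  rcases hslope with ⟨-, hpos⟩ | ⟨hfz, -⟩
  · exact absurd hz.le (not_le.2 (sub_pos.1 hpos))
  · linarith

lemma tendsto_rpow_mul_pow_of_lt_one (p : ℝ) {r : ℝ} (h0 : 0 < r) (h1 : r < 1) :
    Tendsto (fun k : ℕ => (k : ℝ) ^ p * r ^ k) atTop (𝓝 0) := by
  have hb : 0 < -Real.log r := neg_pos.2 (Real.log_neg h0 h1)
  refine ((tendsto_rpow_mul_exp_neg_mul_atTop_nhds_zero p _ hb).comp
    tendsto_natCast_atTop_atTop).congr fun k => ?_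
  simp [Function.comp, neg_neg, ← Real.rpow_natCast, Real.rpow_def_of_pos h0, mul_comm]

lemma hasDerivAt_chernoffBase (β a : ℝ) :
    HasDerivAt (fun x => (β * x + (1 - β)) * x ^ (-a)) (β - a) 1 := by
  have hlin : HasDerivAt (fun x : ℝ => β * x + (1 - β)) β 1 := by
    simpa using ((hasDerivAt_id (1 : ℝ)).const_mul β).add_const (1 - β)
  refine (hlin.mul (Real.hasDerivAt_rpow_const (p := -a) (Or.inl one_ne_zero))).congr_deriv ?_
  simp only [Real.one_rpow]
  ring

section tails

variable {β : ℝ} (h0 : 0 ≤ β) (h1 : β ≤ 1)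
include h0 h1

/- `x ↦ (βx + 1 - β) x^{-a}` equals `1` at `x = 1` with derivative `β - a`, so it drops below `1`
on one side of `1`; there the Chernoff bound decays geometrically. -/
lemma exists_sum_binomProb_upperTail_le_pow {a : ℝ} (ha : β < a) :
    ∃ r, 0 < r ∧ r < 1 ∧
      ∀ k : ℕ, ∑ s ∈ range (k + 1) with a * k ≤ ((s : ℕ) : ℝ), binomProb β k s ≤ r ^ k := by
  obtain ⟨x, hlt, hx⟩ := (((hasDerivAt_chernoffBase β a).eventually_nhdsGT_lt
    (sub_neg.2 ha)).and self_mem_nhdsWithin).exists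
  have hx : 1 < x := hx
  refine ⟨_, ?_, by simpa using hlt, fun k => sum_binomProb_filter_le h0 h1 (by linarith) a k _
    fun s hs => Real.one_le_rpow hx.le (sub_nonneg.2 hs)⟩
  have : 0 < β * x + (1 - β) := by nlinarith
  positivity

lemma exists_sum_binomProb_lowerTail_le_pow {a : ℝ} (ha : a < β) :
    ∃ r, 0 < r ∧ r < 1 ∧
      ∀ k : ℕ, ∑ s ∈ range (k + 1) with ((s : ℕ) : ℝ) < a * k, binomProb β k s ≤ r ^ k := by
  obtain ⟨y, ⟨hlt, hy1⟩, hy0⟩ := (((hasDerivAt_chernoffBase β a).eventually_nhdsLT_lt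
    (sub_pos.2 ha)).and self_mem_nhdsWithin).and
    (nhdsWithin_le_nhds (eventually_gt_nhds one_pos)) |>.exists
  have hy1 : y < 1 := hy1
  refine ⟨_, ?_, by simpa using hlt, fun k => sum_binomProb_filter_le h0 h1 hy0 a k _
    fun s hs => Real.one_le_rpow_of_pos_of_le_one_of_nonpos hy0 hy1.le (by linarith)⟩
  have : 0 < β * y + (1 - β) := by nlinarith
  positivity

end tails

lemma rpow_mul_rpow_neg {a b : ℝ} (ha : 0 ≤ a) (hb : 0 ≤ b) (p : ℝ) :
    a ^ p * b ^ (-p) = (a / b) ^ p := by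
  rw [Real.div_rpow ha hb, Real.rpow_neg hb, div_eq_mul_inv]

noncomputable def binomialWeightedSum (β p : ℝ) (m k : ℕ) : ℝ :=
  (β * k) ^ p * ∑ s ∈ range (k - m + 1), ((k : ℝ) - s) ^ (-p) * binomProb β k s

section weightedSum

variable {β p : ℝ}

lemma binomialWeightedSum_eq (h0 : 0 ≤ β) (m k : ℕ) :
    binomialWeightedSum β p m k
      = ∑ s ∈ range (k - m + 1), (β * k / (k - s : ℕ)) ^ p * binomProb β k s := by
  rw [binomialWeightedSum, mul_sum]
  refine sum_congr rfl fun s hs => ?_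
  have hsk : s ≤ k := by have := mem_range.1 hs; omega
  rw [← mul_assoc, rpow_mul_rpow_neg (by positivity) (sub_nonneg.2 (by exact_mod_cast hsk)),
    Nat.cast_sub hsk]

lemma binomialWeightedSum_le (h0 : 0 ≤ β) (h1 : β ≤ 1) (hp : 0 ≤ p) {δ : ℝ}
    (hδ : 0 < 1 - β - δ) (m k : ℕ) :
    binomialWeightedSum β p m k ≤ (β / (1 - β - δ)) ^ p
      + (β * k) ^ p * ∑ s ∈ range (k + 1) with (β + δ) * k ≤ ((s : ℕ) : ℝ), binomProb β k s := by
  have hweight : ∀ s ∈ range (k + 1), (β * k / (k - s : ℕ)) ^ p * binomProb β k s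
      ≤ (β / (1 - β - δ)) ^ p * binomProb β k s
        + (β * k) ^ p * if (β + δ) * k ≤ (s : ℝ) then binomProb β k s else 0 := by
    intro s hs
    have hb := binomProb_nonneg h0 h1 k s
    split_ifs with htail
    · -- `k - s` is `0` (where division gives `0`) or at least `1`
      have : β * k / (k - s : ℕ) ≤ β * k := by
        rcases Nat.eq_zero_or_pos (k - s) with h | h
        · rw [h, Nat.cast_zero, div_zero]; positivity
        · exact div_le_self (by positivity) (Nat.one_le_cast.2 h)
      have := Real.rpow_le_rpow (by positivity) this hp
      nlinarith [Real.rpow_nonneg (div_nonneg h0 hδ.le) p]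
    · rw [Nat.cast_sub (by have := mem_range.1 hs; omega)]
      have hpos : 0 < (k : ℝ) - s := by nlinarith
      have : β * k / (k - s) ≤ β / (1 - β - δ) := by
        rw [div_le_div_iff₀ hpos hδ]
        nlinarith
      rw [mul_zero, add_zero]
      exact mul_le_mul_of_nonneg_right (Real.rpow_le_rpow (by positivity) this hp) hb
  calc binomialWeightedSum β p m k
      = ∑ s ∈ range (k - m + 1), (β * k / (k - s : ℕ)) ^ p * binomProb β k s :=
        binomialWeightedSum_eq h0 m k
    _ ≤ ∑ s ∈ range (k + 1), (β * k / (k - s : ℕ)) ^ p * binomProb β k s :=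
        sum_le_sum_of_subset_of_nonneg (range_subset_range.2 (by omega)) fun s _ _ =>
          mul_nonneg (by positivity) (binomProb_nonneg h0 h1 k s)
    _ ≤ _ := sum_le_sum hweight
    _ = _ := by rw [sum_add_distrib, ← mul_sum, ← mul_sum, sum_binomProb, sum_filter, mul_one]

lemma le_binomialWeightedSum (h0 : 0 ≤ β) (h1 : β ≤ 1) (hp : 0 ≤ p) {δ : ℝ}
    (hδ : 0 < 1 - β + δ) {m k : ℕ} (hk : (β + δ) * k ≤ (k : ℝ) - m) :
    (β / (1 - β + δ)) ^ p
        * (1 - ∑ s ∈ range (k + 1) with ((s : ℕ) : ℝ) < (β - δ) * k, binomProb β k s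
          - ∑ s ∈ range (k + 1) with (β + δ) * k ≤ ((s : ℕ) : ℝ), binomProb β k s)
      ≤ binomialWeightedSum β p m k := by
  set c := (β / (1 - β + δ)) ^ p
  have hc : 0 ≤ c := by positivity
  have hweight : ∀ s ∈ range (k + 1),
      c * binomProb β k s - c * (if (s : ℝ) < (β - δ) * k then binomProb β k s else 0)
          - c * (if (β + δ) * k ≤ (s : ℝ) then binomProb β k s else 0)
        ≤ if s ∈ range (k - m + 1) then (β * k / (k - s : ℕ)) ^ p * binomProb β k s else 0 := by
    intro s hs
    have hb := binomProb_nonneg h0 h1 k s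
    have hrhs : 0 ≤ if s ∈ range (k - m + 1)
        then (β * k / (k - s : ℕ)) ^ p * binomProb β k s else 0 := by
      split_ifs <;> positivity
    have hlowtail : 0 ≤ c * if (s : ℝ) < (β - δ) * k then binomProb β k s else 0 := by
      split_ifs <;> positivity
    have huptail : 0 ≤ c * if (β + δ) * k ≤ (s : ℝ) then binomProb β k s else 0 := by
      split_ifs <;> positivity
    by_cases hlow : (s : ℝ) < (β - δ) * k
    · rw [if_pos hlow] at hlowtail ⊢; linarith
    by_cases hup : (β + δ) * k ≤ (s : ℝ)
    · rw [if_pos hup] at huptail ⊢; linarith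
    have hsm : (s : ℝ) < k - m := by linarith
    have hmk : m ≤ k := by exact_mod_cast (by linarith [s.cast_nonneg (α := ℝ)] : (m : ℝ) ≤ k)
    have hsk : s ≤ k - m := by
      rw [← Nat.cast_sub hmk] at hsm
      exact (Nat.cast_lt.1 hsm).le
    rw [if_neg hlow, if_neg hup, if_pos (mem_range_succ_iff.2 hsk), mul_zero, sub_zero,
      sub_zero, Nat.cast_sub (by omega)]
    have hpos : 0 < (k : ℝ) - s := by linarith [m.cast_nonneg (α := ℝ)]
    have : β / (1 - β + δ) ≤ β * k / (k - s) := by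
      rw [div_le_div_iff₀ hδ hpos]
      nlinarith
    exact mul_le_mul_of_nonneg_right (Real.rpow_le_rpow (by positivity) this hp) hb
  calc c * (1 - ∑ s ∈ range (k + 1) with ((s : ℕ) : ℝ) < (β - δ) * k, binomProb β k s
          - ∑ s ∈ range (k + 1) with (β + δ) * k ≤ ((s : ℕ) : ℝ), binomProb β k s)
      = ∑ s ∈ range (k + 1), (c * binomProb β k s
          - c * (if (s : ℝ) < (β - δ) * k then binomProb β k s else 0)
          - c * (if (β + δ) * k ≤ (s : ℝ) then binomProb β k s else 0)) := by
        rw [sum_sub_distrib, sum_sub_distrib, ← mul_sum, ← mul_sum, ← mul_sum, sum_binomProb,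
          sum_filter, sum_filter]
        ring
    _ ≤ ∑ s ∈ range (k + 1),
          if s ∈ range (k - m + 1) then (β * k / (k - s : ℕ)) ^ p * binomProb β k s else 0 :=
        sum_le_sum hweight
    _ = binomialWeightedSum β p m k := by
        rw [sum_ite_mem, inter_eq_right.2 (range_subset_range.2 (by omega)),
          binomialWeightedSum_eq h0]

lemma exists_tendsto_ge_binomialWeightedSum (h0 : 0 ≤ β) (h1 : β ≤ 1) (hp : 0 ≤ p) {δ : ℝ}
    (hδ0 : 0 < δ) (hδ : δ < 1 - β) (m : ℕ) :
    ∃ u : ℕ → ℝ, Tendsto u atTop (𝓝 ((β / (1 - β - δ)) ^ p)) ∧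
      ∀ k, binomialWeightedSum β p m k ≤ u k := by
  obtain ⟨r, hr0, hr1, htail⟩ :=
    exists_sum_binomProb_upperTail_le_pow h0 h1 (lt_add_of_pos_right β hδ0)
  refine ⟨fun k => (β / (1 - β - δ)) ^ p + β ^ p * ((k : ℝ) ^ p * r ^ k), ?_, fun k => ?_⟩
  · simpa using (tendsto_rpow_mul_pow_of_lt_one p hr0 hr1).const_mul (β ^ p) |>.const_add _
  · refine (binomialWeightedSum_le h0 h1 hp (δ := δ) (by linarith) m k).trans
      (add_le_add le_rfl ?_)
    rw [← mul_assoc, ← Real.mul_rpow h0 k.cast_nonneg]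
    exact mul_le_mul_of_nonneg_left (htail k) (by positivity)

lemma exists_tendsto_le_binomialWeightedSum (h0 : 0 ≤ β) (h1 : β ≤ 1) (hp : 0 ≤ p) {δ : ℝ}
    (hδ0 : 0 < δ) (hδ : δ < 1 - β) (m : ℕ) :
    ∃ v : ℕ → ℝ, Tendsto v atTop (𝓝 ((β / (1 - β + δ)) ^ p)) ∧
      ∀ᶠ k in atTop, v k ≤ binomialWeightedSum β p m k := by
  obtain ⟨r, hr0, hr1, hlow⟩ :=
    exists_sum_binomProb_lowerTail_le_pow h0 h1 (sub_lt_self β hδ0)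
  obtain ⟨r', hr0', hr1', hup⟩ :=
    exists_sum_binomProb_upperTail_le_pow h0 h1 (lt_add_of_pos_right β hδ0)
  refine ⟨fun k => (β / (1 - β + δ)) ^ p * (1 - r ^ k - r' ^ k), ?_, ?_⟩
  · simpa using ((tendsto_pow_atTop_nhds_zero_of_lt_one hr0.le hr1).const_sub 1
      |>.sub (tendsto_pow_atTop_nhds_zero_of_lt_one hr0'.le hr1')).const_mul ((β / (1 - β + δ)) ^ p)
  · filter_upwards [tendsto_natCast_atTop_atTop.eventually_ge_atTop (m / (1 - β - δ))] with k hk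
    rw [div_le_iff₀ (by linarith)] at hk
    refine le_trans ?_ (le_binomialWeightedSum h0 h1 hp (δ := δ) (by linarith) (by linarith))
    exact mul_le_mul_of_nonneg_left (by linarith [hlow k, hup k]) (by positivity)

end weightedSum

lemma tendsto_of_forall_bounds {ι α : Type*} {F : Filter ι} [F.NeBot] {l : Filter α}
    {a : α → ℝ} {L : ℝ} {cu cl : ι → ℝ} (hcu : Tendsto cu F (𝓝 L)) (hcl : Tendsto cl F (𝓝 L))
    (hup : ∀ᶠ i in F, ∃ u : α → ℝ, Tendsto u l (𝓝 (cu i)) ∧ ∀ᶠ k in l, a k ≤ u k)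
    (hlow : ∀ᶠ i in F, ∃ v : α → ℝ, Tendsto v l (𝓝 (cl i)) ∧ ∀ᶠ k in l, v k ≤ a k) :
    Tendsto a l (𝓝 L) := by
  refine tendsto_order.2 ⟨fun b hb => ?_, fun b hb => ?_⟩
  · obtain ⟨i, hi, v, hv, hva⟩ := ((hcl.eventually (lt_mem_nhds hb)).and hlow).exists
    filter_upwards [hv.eventually (lt_mem_nhds hi), hva] with k h1 h2 using h1.trans_le h2
  · obtain ⟨i, hi, u, hu, hau⟩ := ((hcu.eventually (gt_mem_nhds hb)).and hup).exists
    filter_upwards [hu.eventually (gt_mem_nhds hi), hau] with k h1 h2 using h2.trans_lt h1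

theorem tendsto_binomialWeightedSum {β p : ℝ} (h0 : 0 ≤ β) (h1 : β < 1) (hp : 0 ≤ p) (m : ℕ) :
    Tendsto (binomialWeightedSum β p m) atTop (𝓝 ((β / (1 - β)) ^ p)) := by
  have hcont : ∀ σ : ℝ, Tendsto (fun δ => (β / (1 - β + σ * δ)) ^ p) (𝓝[>] 0)
      (𝓝 ((β / (1 - β)) ^ p)) := fun σ => by
    have : ContinuousAt (fun δ => (β / (1 - β + σ * δ)) ^ p) 0 :=
      (continuousAt_const.div (by fun_prop) (by simp; linarith)).rpow_const (Or.inr hp)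
    simpa using this.tendsto.mono_left nhdsWithin_le_nhds
  refine tendsto_of_forall_bounds (F := 𝓝[>] (0 : ℝ))
    (by simpa [← sub_eq_add_neg] using hcont (-1)) (by simpa using hcont 1) ?_ ?_
  · filter_upwards [Ioo_mem_nhdsGT (sub_pos.2 h1)] with δ hδ
    obtain ⟨u, hu, hle⟩ := exists_tendsto_ge_binomialWeightedSum h0 h1.le hp hδ.1 hδ.2 m
    exact ⟨u, hu, .of_forall hle⟩
  · filter_upwards [Ioo_mem_nhdsGT (sub_pos.2 h1)] with δ hδ
      using exists_tendsto_le_binomialWeightedSum h0 h1.le hp hδ.1 hδ.2 m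

theorem binomial_weighted_concentration_general (β : ℝ) (hβ : β ∈ Set.Ioo (0 : ℝ) 1)
    (l : ℕ) :
    Tendsto (fun k : ℕ =>
        (β * k) ^ ((l : ℝ) / 2) *
          ∑ s ∈ Finset.range (k - l + 1),
            ((k : ℝ) - s) ^ (-(l : ℝ) / 2) *
              ((Nat.choose k s : ℝ) * β ^ s * (1 - β) ^ (k - s)))
      atTop (nhds ((β / (1 - β)) ^ ((l : ℝ) / 2))) := by
  simp only [neg_div]
  exact tendsto_binomialWeightedSum hβ.1.le hβ.2 (by positivity : (0 : ℝ) ≤ l / 2) l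

/-- Weighted concentration for the binomial distribution `B(k,β)`: with
`s₀ = βk` and fixed `l ≥ 1`,
`s₀^{l/2} ∑_{s=0}^{k-l} (k-s)^{-l/2} P(X_k = s) → (β/(1-β))^{l/2}` as `k → ∞`. -/
theorem binomial_weighted_concentration (β : ℝ) (hβ : β ∈ Set.Ioo (0 : ℝ) 1)
    (l : ℕ) (hl : 1 ≤ l) :
    Tendsto (fun k : ℕ =>
        (β * k) ^ ((l : ℝ) / 2) *
          ∑ s ∈ Finset.range (k - l + 1),
            ((k : ℝ) - s) ^ (-(l : ℝ) / 2) *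
              ((Nat.choose k s : ℝ) * β ^ s * (1 - β) ^ (k - s)))
      atTop (nhds ((β / (1 - β)) ^ ((l : ℝ) / 2))) :=
  binomial_weighted_concentration_general β hβ l
end
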